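/- arXiv:2111.11663 — 6 statements merged into one kernel-verified Lean document; each statement's English description precedes it below -/
import Mathlib

section
/- For every z ∈ ℂ with z ≠ 0 and z ∉ {q^k : k ∈ ℤ} ∪ {−q^k : k ∈ ℤ}, the bilateral series h^α(z) = Σ_{k=−∞}^∞ 2 z q^{k(1+α)} / (z² − q^{2k}) converges absolutely, and h^α satisfies the q-difference equation h^α(qz) = q^α h^α(z) for all such z. -/
/-- The function `h^α(z) = Σ_{k=-∞}^∞ 2 z q^{k(1+α)} / (z² - q^{2k})`. -/
noncomputable def hAlpha (q α : ℝ) (z : ℂ) : ℂ :=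
  ∑' k : ℤ, 2 * z * ((q ^ ((k : ℝ) * (1 + α)) : ℝ) : ℂ) / (z ^ 2 - (q : ℂ) ^ (2 * k))

section
variable (q α : ℝ) (z : ℂ)

lemma rpow_eq_zpow (hq0 : 0 < q) (k : ℤ) :
    q ^ ((k : ℝ) * (1 + α)) = (q ^ (1 + α)) ^ k := by
  rw [mul_comm, Real.rpow_mul hq0.le, Real.rpow_intCast]

lemma den_ne (hq0 : 0 < q) (hz : ∀ k : ℤ, z ≠ (q : ℂ) ^ k ∧ z ≠ -((q : ℂ) ^ k)) (k : ℤ) :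
    z ^ 2 - (q : ℂ) ^ (2 * k) ≠ 0 := by
  have h : z ^ 2 - (q : ℂ) ^ (2 * k) = (z - (q:ℂ) ^ k) * (z + (q:ℂ) ^ k) := by
    rw [mul_comm 2 k, zpow_mul, zpow_two]; ring
  rw [h]
  exact mul_ne_zero (sub_ne_zero.2 (hz k).1)
    (fun h0 => (hz k).2 (by linear_combination h0))

end

set_option maxHeartbeats 1000000 in
/-- absolute convergence of the bilateral series defining `h^α`
and the q-difference equation `h^α(qz) = q^α h^α(z)`. -/
theorem statement5
    (q α : ℝ) (hq0 : 0 < q) (hq1 : q < 1) (hα1 : -1 < α) (hα2 : α < 1)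
    (z : ℂ) (hz0 : z ≠ 0) (hz : ∀ k : ℤ, z ≠ (q : ℂ) ^ k ∧ z ≠ -((q : ℂ) ^ k)) :
    Summable (fun k : ℤ =>
      ‖2 * z * ((q ^ ((k : ℝ) * (1 + α)) : ℝ) : ℂ) / (z ^ 2 - (q : ℂ) ^ (2 * k))‖) ∧
    hAlpha q α ((q : ℂ) * z) = ((q ^ α : ℝ) : ℂ) * hAlpha q α z := by
  have hqc : (q : ℂ) ≠ 0 := by exact_mod_cast hq0.ne'
  have hznorm : 0 < ‖z‖ := norm_pos_iff.2 hz0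
  have hqnormC : ∀ k : ℤ, ‖(q : ℂ) ^ (2 * k)‖ = q ^ (2 * k) := by
    intro k
    rw [norm_zpow, Complex.norm_real, Real.norm_eq_abs, abs_of_pos hq0]
  have hnorm : ∀ k : ℤ,
      ‖2 * z * ((q ^ ((k : ℝ) * (1 + α)) : ℝ) : ℂ) / (z ^ 2 - (q : ℂ) ^ (2 * k))‖
        = 2 * ‖z‖ * q ^ ((k : ℝ) * (1 + α)) / ‖z ^ 2 - (q : ℂ) ^ (2 * k)‖ := by
    intro k
    rw [norm_div, norm_mul, norm_mul, Complex.norm_real, Real.norm_eq_abs,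
      abs_of_pos (Real.rpow_pos_of_pos hq0 _)]
    norm_num
  constructor
  · -- Summability
    set r := q ^ (1 + α) with hr
    set s := q ^ (1 - α) with hs
    have hr0 : 0 < r := Real.rpow_pos_of_pos hq0 _
    have hr1 : r < 1 := Real.rpow_lt_one hq0.le hq1 (by linarith)
    have hs0 : 0 < s := Real.rpow_pos_of_pos hq0 _
    have hs1 : s < 1 := Real.rpow_lt_one hq0.le hq1 (by linarith)
    apply Summable.of_nat_of_neg_add_one
    · -- positive indices
      obtain ⟨N, hN⟩ := exists_pow_lt_of_lt_one (show (0:ℝ) < ‖z‖^2/2 by positivity) hq1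
      rw [← summable_nat_add_iff N]
      apply Summable.of_nonneg_of_le (f := fun n => (4 / ‖z‖ * r ^ N) * r ^ n)
        (fun n => norm_nonneg _)
      · intro n
        have hk : ((((n + N : ℕ) : ℤ)) : ℝ) = (n : ℝ) + N := by push_cast; ring
        rw [hnorm]
        have hle : q ^ (2 * ((n + N : ℕ) : ℤ)) ≤ ‖z‖^2/2 := by
          calc q ^ (2 * ((n + N : ℕ) : ℤ)) ≤ q ^ ((N : ℤ)) := by
                apply zpow_le_zpow_right_of_le_one₀ hq0 hq1.le
                omega
            _ = q ^ N := zpow_natCast q N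
            _ ≤ ‖z‖^2/2 := hN.le
        have hden : ‖z‖^2/2 ≤ ‖z ^ 2 - (q : ℂ) ^ (2 * ((n + N : ℕ) : ℤ))‖ := by
          calc ‖z‖^2/2 = ‖z^2‖ - ‖z‖^2/2 := by rw [norm_pow]; ring
            _ ≤ ‖z^2‖ - ‖(q : ℂ) ^ (2 * ((n + N : ℕ) : ℤ))‖ := by
                rw [hqnormC]; linarith
            _ ≤ _ := norm_sub_norm_le _ _
        have hrp : q ^ ((((n + N : ℕ) : ℤ) : ℝ) * (1 + α)) = r ^ N * r ^ n := by
          rw [rpow_eq_zpow q α hq0, ← hr, zpow_natCast, pow_add]; ring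
        calc 2 * ‖z‖ * q ^ ((((n + N : ℕ) : ℤ) : ℝ) * (1 + α)) /
              ‖z ^ 2 - (q : ℂ) ^ (2 * ((n + N : ℕ) : ℤ))‖
            ≤ 2 * ‖z‖ * q ^ ((((n + N : ℕ) : ℤ) : ℝ) * (1 + α)) / (‖z‖^2/2) := by
              gcongr
          _ = 4 / ‖z‖ * r ^ N * r ^ n := by
              rw [hrp]; field_simp [hznorm.ne', norm_ne_zero_iff.mpr hz0]; ring
      · exact (summable_geometric_of_lt_one hr0.le hr1).mul_left _
    · -- negative indices
      obtain ⟨M, hM⟩ := exists_pow_lt_of_lt_one (show (0:ℝ) < 1/(2*‖z‖^2) by positivity) hq1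
      rw [← summable_nat_add_iff M]
      apply Summable.of_nonneg_of_le (f := fun n => (4 * ‖z‖ * s ^ (M + 1)) * s ^ n)
        (fun n => norm_nonneg _)
      · intro n
        set k : ℤ := -(((n + M : ℕ) : ℤ) + 1) with hkdef
        have hk : (k : ℝ) = -((n : ℝ) + M + 1) := by rw [hkdef]; push_cast; ring
        rw [hnorm]
        have h2z : 2 * ‖z‖^2 ≤ q ^ (2 * k) := by
          have h1 : 2 * ‖z‖^2 < (q ^ M)⁻¹ := by
            rw [lt_inv_comm₀ (by positivity) (by positivity)]
            calc q ^ M < 1/(2*‖z‖^2) := hM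
              _ = (2*‖z‖^2)⁻¹ := one_div _
          have h2 : (q ^ M : ℝ)⁻¹ = q ^ (-(M:ℤ)) := by
            rw [zpow_neg, zpow_natCast]
          have h3 : q ^ (-(M:ℤ)) ≤ q ^ (2 * k) := by
            apply zpow_le_zpow_right_of_le_one₀ hq0 hq1.le
            omega
          linarith
        have hden : q ^ (2 * k) / 2 ≤ ‖z ^ 2 - (q : ℂ) ^ (2 * k)‖ := by
          calc q ^ (2 * k) / 2 ≤ q ^ (2 * k) - ‖z‖^2 := by linarith
            _ = ‖(q : ℂ) ^ (2 * k)‖ - ‖z^2‖ := by rw [hqnormC, norm_pow]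
            _ ≤ ‖(q : ℂ) ^ (2 * k) - z^2‖ := norm_sub_norm_le _ _
            _ = ‖z ^ 2 - (q : ℂ) ^ (2 * k)‖ := norm_sub_rev _ _
        have hq2kpos : 0 < q ^ (2 * k) := zpow_pos hq0 _
        have hrp : q ^ ((k : ℝ) * (1 + α)) / q ^ (2 * k) = s ^ (M + 1) * s ^ n := by
          rw [← Real.rpow_intCast q (2 * k), ← Real.rpow_sub hq0]
          have he : (k : ℝ) * (1 + α) - ((2 * k : ℤ) : ℝ)
              = ((n + M + 1 : ℕ) : ℝ) * (1 - α) := by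
            push_cast [hk]
            ring
          rw [he, mul_comm, Real.rpow_mul hq0.le, Real.rpow_natCast, ← hs]
          rw [show n + M + 1 = (M + 1) + n by ring, pow_add]
        calc 2 * ‖z‖ * q ^ ((k : ℝ) * (1 + α)) / ‖z ^ 2 - (q : ℂ) ^ (2 * k)‖
            ≤ 2 * ‖z‖ * q ^ ((k : ℝ) * (1 + α)) / (q ^ (2 * k) / 2) := by
              gcongr
          _ = 4 * ‖z‖ * (q ^ ((k : ℝ) * (1 + α)) / q ^ (2 * k)) := by
              field_simp [hq2kpos.ne']; ring
          _ = 4 * ‖z‖ * s ^ (M + 1) * s ^ n := by rw [hrp]; ring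
      · exact (summable_geometric_of_lt_one hs0.le hs1).mul_left _
  · -- functional equation
    have key : ∀ k : ℤ,
        2 * ((q:ℂ) * z) * ((q ^ ((k : ℝ) * (1 + α)) : ℝ) : ℂ) / (((q:ℂ) * z) ^ 2 - (q : ℂ) ^ (2 * k))
        = ((q ^ α : ℝ) : ℂ) *
          (2 * z * ((q ^ (((k - 1 : ℤ) : ℝ) * (1 + α)) : ℝ) : ℂ) / (z ^ 2 - (q : ℂ) ^ (2 * (k - 1)))) := by
      intro k
      have hd : ((q:ℂ) * z) ^ 2 - (q : ℂ) ^ (2 * k)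
          = (q:ℂ) ^ 2 * (z ^ 2 - (q : ℂ) ^ (2 * (k - 1))) := by
        have h1 : (q:ℂ) ^ (2 * k) = (q:ℂ) ^ 2 * (q:ℂ) ^ (2 * (k - 1)) := by
          rw [← zpow_natCast (q:ℂ) 2, ← zpow_add₀ hqc]
          congr 1
          push_cast
          ring
        rw [h1]; ring
      have e1 : q * q ^ ((k:ℝ) * (1 + α)) = q ^ (1 + (k:ℝ) * (1 + α)) := by
        rw [Real.rpow_add hq0, Real.rpow_one]
      have e2 : q ^ α * q ^ (((k - 1 : ℤ) : ℝ) * (1 + α)) * q ^ 2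
          = q ^ (α + ((k - 1 : ℤ) : ℝ) * (1 + α) + ((2:ℕ):ℝ)) := by
        rw [Real.rpow_add hq0, Real.rpow_add hq0, Real.rpow_natCast]
      have hnum : q * q ^ ((k:ℝ) * (1 + α))
          = q ^ α * q ^ (((k - 1 : ℤ) : ℝ) * (1 + α)) * q ^ 2 := by
        rw [e1, e2]
        congr 1
        push_cast
        ring
      have hd1 : z ^ 2 - (q : ℂ) ^ (2 * (k - 1)) ≠ 0 := den_ne q z hq0 hz _
      rw [hd]
      have hnumC : (q:ℂ) * ((q ^ ((k : ℝ) * (1 + α)) : ℝ) : ℂ)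
          = ((q ^ α : ℝ) : ℂ) * ((q ^ (((k - 1 : ℤ) : ℝ) * (1 + α)) : ℝ) : ℂ) * (q:ℂ) ^ 2 := by
        norm_cast
      push_cast at hnumC ⊢
      rw [mul_div_assoc', div_eq_div_iff (mul_ne_zero (pow_ne_zero 2 hqc) hd1) hd1]
      linear_combination (2 * z * (z ^ 2 - (q : ℂ) ^ (2 * (k - 1)))) * hnumC
    unfold hAlpha
    calc ∑' k : ℤ, 2 * ((q:ℂ) * z) * ((q ^ ((k : ℝ) * (1 + α)) : ℝ) : ℂ) / (((q:ℂ) * z) ^ 2 - (q : ℂ) ^ (2 * k))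
        = ∑' k : ℤ, ((q ^ α : ℝ) : ℂ) *
          (2 * z * ((q ^ (((k - 1 : ℤ) : ℝ) * (1 + α)) : ℝ) : ℂ) / (z ^ 2 - (q : ℂ) ^ (2 * (k - 1)))) :=
          tsum_congr key
      _ = ((q ^ α : ℝ) : ℂ) * ∑' k : ℤ,
          (2 * z * ((q ^ (((k - 1 : ℤ) : ℝ) * (1 + α)) : ℝ) : ℂ) / (z ^ 2 - (q : ℂ) ^ (2 * (k - 1)))) :=
          tsum_mul_left
      _ = ((q ^ α : ℝ) : ℂ) * ∑' k : ℤ,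
          (2 * z * ((q ^ ((k : ℝ) * (1 + α)) : ℝ) : ℂ) / (z ^ 2 - (q : ℂ) ^ (2 * k))) := by
          congr 1
          exact (Equiv.subRight (1 : ℤ)).tsum_eq
            (fun k => 2 * z * ((q ^ ((k : ℝ) * (1 + α)) : ℝ) : ℂ) / (z ^ 2 - (q : ℂ) ^ (2 * k)))
end

section
/- There exists a unique pair of entire functions u, v : ℂ → ℂ such that u is even, v is odd, u(0) = 1, and for all t ∈ ℂ: u(qt) = u(t) − t·v(t) and v(qt) = t q^{2−α} u(t) + (q^{−α} − t² q^{2−α}) v(t). (This is the entire power-series solution S_A = [u, v]^T of the q-difference system S_A(qt) = [[1, −t],[t q^{2−α}, q^{−α} − t² q^{2−α}]] S_A(t).) -/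
set_option maxHeartbeats 1000000
open Filter Finset
open scoped Topology NNReal

noncomputable def st11aa (q α : ℝ) : ℕ → ℝ
  | 0 => 1
  | n+1 => -(q^(2*n+2)) / ((1 - q^(2*n+2)) * (1 - q ^ (2*(n:ℝ)+1+α))) * st11aa q α n

noncomputable def st11bb (q α : ℝ) (n : ℕ) : ℝ :=
  -(q^(2*n+2)) / (1 - q ^ (2*(n:ℝ)+1+α)) * st11aa q α n

noncomputable def st11sb (q α : ℝ) : ℕ → ℝ
  | 0 => 0
  | n+1 => st11bb q α n

section facts
variable {q α : ℝ} (hq0 : 0 < q) (hq1 : q < 1) (hα : -1 < α)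

include hq0 hq1 in
lemma st11_L1 (n : ℕ) : 0 < 1 - q^(2*n+2) := by
  have : q^(2*n+2) < 1 := pow_lt_one₀ hq0.le hq1 (by omega)
  linarith

include hq0 hq1 hα in
lemma st11_L2 (n : ℕ) : 0 < 1 - q ^ (2*(n:ℝ)+1+α) := by
  have hn : (0:ℝ) ≤ (n:ℝ) := Nat.cast_nonneg n
  have h : q ^ (2*(n:ℝ)+1+α) < 1 :=
    Real.rpow_lt_one hq0.le hq1 (by linarith)
  linarith

include hq0 hq1 hα in
lemma st11_key2 (n : ℕ) :
    (q^(2*n+1) - q^(-α)) * st11bb q α n = q^(2-α) * q^(2*n) * st11aa q α n := by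
  have hPα : (0:ℝ) < q ^ α := Real.rpow_pos_of_pos hq0 _
  have hY : q ^ (2*(n:ℝ)+1+α) = q^(2*n+1) * q^α := by
    rw [← Real.rpow_natCast q (2*n+1), ← Real.rpow_add hq0]
    congr 1
    push_cast; ring
  have h2α : q^(2-α) = q^2 * (q^α)⁻¹ := by
    rw [show (2 - α) = 2 + (-α) by ring, Real.rpow_add hq0, Real.rpow_two,
      Real.rpow_neg hq0.le]
  have hiα : q^(-α) = (q^α)⁻¹ := Real.rpow_neg hq0.le α
  have hden := st11_L2 hq0 hq1 hα n
  rw [hY] at hden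
  unfold st11bb
  rw [hY, h2α, hiα]
  field_simp
  ring

include hq0 hq1 hα in
lemma st11_R1 (n : ℕ) :
    (1 - q^(2*n+2)) * st11aa q α (n+1) = st11bb q α n := by
  have h1 := st11_L1 hq0 hq1 n
  have h2 := st11_L2 hq0 hq1 hα n
  show (1 - q^(2*n+2)) *
    (-(q^(2*n+2)) / ((1 - q^(2*n+2)) * (1 - q ^ (2*(n:ℝ)+1+α))) * st11aa q α n)
    = st11bb q α n
  unfold st11bb
  field_simp

include hq0 hq1 hα in
lemma st11_keyA (n : ℕ) : st11sb q α n = (1 - q^(2*n)) * st11aa q α n := by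
  cases n with
  | zero => simp [st11sb, st11aa]
  | succ n =>
    show st11bb q α n = (1 - q^(2*(n+1))) * st11aa q α (n+1)
    rw [show 2*(n+1) = 2*n+2 by ring, ← st11_R1 hq0 hq1 hα n]

include hq0 hq1 hα in
lemma st11_coeff1 (n : ℕ) :
    st11aa q α n * (q^2)^n = st11aa q α n - st11sb q α n := by
  rw [st11_keyA hq0 hq1 hα n, ← pow_mul]; ring

include hq0 hq1 hα in
lemma st11_coeff2 (n : ℕ) :
    q * st11bb q α n * (q^2)^n
      = q^(2-α) * st11aa q α n + q^(-α) * st11bb q α n - q^(2-α) * st11sb q α n := by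
  have k2 := st11_key2 hq0 hq1 hα n
  have k4 := st11_keyA hq0 hq1 hα n
  linear_combination k2 + q^(2-α) * k4

include hq0 hq1 hα in
lemma st11_decayA (n : ℕ) :
    |st11aa q α (n+1)| ≤ q^(2*n+2) / ((1-q^2)*(1-q^(1+(α:ℝ)))) * |st11aa q α n| := by
  have h1 := st11_L1 hq0 hq1 n
  have h2 := st11_L2 hq0 hq1 hα n
  have hq2 : 0 < 1 - q^2 := by
    have : q^2 < 1 := pow_lt_one₀ hq0.le hq1 (by omega)
    linarith
  have hqa : 0 < 1 - q^(1+(α:ℝ)) := by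
    have : q ^ (1+(α:ℝ)) < 1 := Real.rpow_lt_one hq0.le hq1 (by linarith)
    linarith
  have habs : |st11aa q α (n+1)|
      = q^(2*n+2) / ((1 - q^(2*n+2)) * (1 - q ^ (2*(n:ℝ)+1+α))) * |st11aa q α n| := by
    show |(-(q^(2*n+2)) / ((1 - q^(2*n+2)) * (1 - q ^ (2*(n:ℝ)+1+α))) * st11aa q α n)| = _
    rw [abs_mul, abs_div, abs_neg, abs_of_nonneg (by positivity),
      abs_of_pos (mul_pos h1 h2)]
  rw [habs]
  have hnum : (0:ℝ) ≤ q^(2*n+2) := by positivity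
  have e1 : q^(2*n+2) ≤ q^2 := pow_le_pow_of_le_one hq0.le hq1.le (by omega)
  have e2 : q^(2*(n:ℝ)+1+α) ≤ q^(1+(α:ℝ)) :=
    Real.rpow_le_rpow_of_exponent_ge hq0 hq1.le (by
      have : (0:ℝ) ≤ (n:ℝ) := Nat.cast_nonneg n
      linarith)
  have hd : (1-q^2)*(1-q^(1+(α:ℝ))) ≤ (1 - q^(2*n+2)) * (1 - q ^ (2*(n:ℝ)+1+α)) :=
    mul_le_mul (by linarith) (by linarith) hqa.le (by linarith)
  refine mul_le_mul_of_nonneg_right ?_ (abs_nonneg _)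
  exact div_le_div_of_nonneg_left hnum (mul_pos hq2 hqa) hd

include hq0 hq1 hα in
lemma st11_decayB (n : ℕ) :
    |st11bb q α n| ≤ q^2 / (1-q^(1+(α:ℝ))) * |st11aa q α n| := by
  have h2 := st11_L2 hq0 hq1 hα n
  have hqa : 0 < 1 - q^(1+(α:ℝ)) := by
    have : q ^ (1+(α:ℝ)) < 1 := Real.rpow_lt_one hq0.le hq1 (by linarith)
    linarith
  have habs : |st11bb q α n|
      = q^(2*n+2) / (1 - q ^ (2*(n:ℝ)+1+α)) * |st11aa q α n| := by
    show |(-(q^(2*n+2)) / (1 - q ^ (2*(n:ℝ)+1+α)) * st11aa q α n)| = _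
    rw [abs_mul, abs_div, abs_neg, abs_of_nonneg (by positivity), abs_of_pos h2]
  rw [habs]
  have e1 : q^(2*n+2) ≤ q^2 := pow_le_pow_of_le_one hq0.le hq1.le (by omega)
  have e2 : q^(2*(n:ℝ)+1+α) ≤ q^(1+(α:ℝ)) :=
    Real.rpow_le_rpow_of_exponent_ge hq0 hq1.le (by
      have : (0:ℝ) ≤ (n:ℝ) := Nat.cast_nonneg n
      linarith)
  refine mul_le_mul_of_nonneg_right ?_ (abs_nonneg _)
  exact div_le_div₀ (by positivity) e1 hqa (by linarith)

include hq0 hq1 hα in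
lemma st11_SA (r : ℝ) (hr : 0 ≤ r) :
    Summable (fun n => |st11aa q α n| * r^n) := by
  set m0 : ℝ := (1-q^2)*(1-q^(1+(α:ℝ))) with hm0def
  have hq2 : 0 < 1 - q^2 := by
    have : q^2 < 1 := pow_lt_one₀ hq0.le hq1 (by omega)
    linarith
  have hqa : 0 < 1 - q^(1+(α:ℝ)) := by
    have : q ^ (1+(α:ℝ)) < 1 := Real.rpow_lt_one hq0.le hq1 (by linarith)
    linarith
  have hm0 : 0 < m0 := mul_pos hq2 hqa
  apply summable_of_ratio_norm_eventually_le (r := 1/2) (by norm_num)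
  have htend : Tendsto (fun n : ℕ => q^(2*n+2) * r / m0) atTop (𝓝 0) := by
    have hq2lt : q^2 < 1 := pow_lt_one₀ hq0.le hq1 (by omega)
    have h := ((tendsto_pow_atTop_nhds_zero_of_lt_one (by positivity) hq2lt).mul_const
      (q^2 * r / m0))
    simp only [zero_mul] at h
    convert h using 2 with n
    ring
  filter_upwards [htend.eventually_lt_const (show (0:ℝ) < 1/2 by norm_num)] with n hn
  have hd := st11_decayA hq0 hq1 hα n
  have h1' : 0 ≤ |st11aa q α n| * r^n := by positivity
  rw [Real.norm_eq_abs, Real.norm_eq_abs, abs_of_nonneg (by positivity),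
    abs_of_nonneg h1']
  calc |st11aa q α (n+1)| * r^(n+1)
      = (|st11aa q α (n+1)| * r) * r^n := by ring
    _ ≤ ((q^(2*n+2) / m0 * |st11aa q α n|) * r) * r^n := by
        refine mul_le_mul_of_nonneg_right (mul_le_mul_of_nonneg_right ?_ hr)
          (pow_nonneg hr n)
        exact hd
    _ = (q^(2*n+2) * r / m0) * (|st11aa q α n| * r^n) := by ring
    _ ≤ 1/2 * (|st11aa q α n| * r^n) := mul_le_mul_of_nonneg_right hn.le h1'

include hq0 hq1 hα in
lemma st11_SB (r : ℝ) (hr : 0 ≤ r) :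
    Summable (fun n => |st11bb q α n| * r^n) := by
  have hqa : 0 < 1 - q^(1+(α:ℝ)) := by
    have : q ^ (1+(α:ℝ)) < 1 := Real.rpow_lt_one hq0.le hq1 (by linarith)
    linarith
  have hs : Summable (fun n => q^2 / (1-q^(1+(α:ℝ))) * (|st11aa q α n| * r^n)) :=
    (st11_SA hq0 hq1 hα r hr).mul_left _
  refine Summable.of_nonneg_of_le (fun n => by positivity) (fun n => ?_) hs
  calc |st11bb q α n| * r^n
      ≤ (q^2 / (1-q^(1+(α:ℝ))) * |st11aa q α n|) * r^n :=
        mul_le_mul_of_nonneg_right (st11_decayB hq0 hq1 hα n) (pow_nonneg hr n)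
    _ = q^2 / (1-q^(1+(α:ℝ))) * (|st11aa q α n| * r^n) := by ring

end facts

-- complex layer
lemma st11_entire {c : ℕ → ℝ} (hc : ∀ r : ℝ, 0 ≤ r → Summable fun n => |c n| * r^n) :
    Differentiable ℂ (FormalMultilinearSeries.ofScalarsSum (E := ℂ)
        (fun n => ((c n : ℝ) : ℂ))) ∧
      ∀ x : ℂ, FormalMultilinearSeries.ofScalarsSum (E := ℂ) (fun n => ((c n : ℝ) : ℂ)) x
        = ∑' n, ((c n : ℝ) : ℂ) * x^n := by
  set cc : ℕ → ℂ := fun n => ((c n : ℝ) : ℂ) with hccdef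
  have hrad : (FormalMultilinearSeries.ofScalars ℂ cc).radius = ⊤ := by
    apply FormalMultilinearSeries.radius_eq_top_of_summable_norm
    intro r
    have he : (fun n => ‖(FormalMultilinearSeries.ofScalars ℂ cc) n‖ * (r:ℝ)^n)
        = fun n => |c n| * (r:ℝ)^n := by
      funext n
      rw [FormalMultilinearSeries.ofScalars_norm, hccdef]
      simp [Complex.norm_real, Real.norm_eq_abs]
    rw [he]
    exact hc r r.coe_nonneg
  have hb := (FormalMultilinearSeries.ofScalars ℂ cc).hasFPowerSeriesOnBall
    (by rw [hrad]; exact ENNReal.zero_lt_top)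
  constructor
  · intro x
    refine ((hb.analyticAt_of_mem ?_).differentiableAt)
    rw [EMetric.mem_ball, hrad]
    exact edist_lt_top _ _
  · intro x
    simpa [smul_eq_mul] using FormalMultilinearSeries.ofScalars_sum_eq cc x

noncomputable def st11F (q α : ℝ) : ℂ → ℂ :=
  FormalMultilinearSeries.ofScalarsSum (E := ℂ) (fun n => ((st11aa q α n : ℝ) : ℂ))

noncomputable def st11G (q α : ℝ) : ℂ → ℂ :=
  FormalMultilinearSeries.ofScalarsSum (E := ℂ) (fun n => ((st11bb q α n : ℝ) : ℂ))

lemma st11_sumc {c : ℕ → ℝ} (hc : ∀ r : ℝ, 0 ≤ r → Summable fun n => |c n| * r^n)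
    (x : ℂ) : Summable fun n => ((c n : ℝ) : ℂ) * x^n := by
  refine Summable.of_norm ?_
  have he : (fun n => ‖((c n : ℝ) : ℂ) * x^n‖) = fun n => |c n| * ‖x‖^n := by
    funext n
    rw [norm_mul, norm_pow, Complex.norm_real, Real.norm_eq_abs]
  rw [he]
  exact hc ‖x‖ (norm_nonneg x)

section ids
variable {q α : ℝ} (hq0 : 0 < q) (hq1 : q < 1) (hα : -1 < α)

include hq0 hq1 hα in
lemma st11_sum_sb (x : ℂ) : Summable fun n => ((st11sb q α n : ℝ) : ℂ) * x^n := by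
  rw [← summable_nat_add_iff 1]
  have he : (fun n => ((st11sb q α (n+1) : ℝ) : ℂ) * x^(n+1))
      = fun n => x * (((st11bb q α n : ℝ) : ℂ) * x^n) := by
    funext n
    show ((st11bb q α n : ℝ) : ℂ) * x^(n+1) = _
    ring
  rw [he]
  exact (st11_sumc (st11_SB hq0 hq1 hα) x).mul_left x

include hq0 hq1 hα in
lemma st11_Gval (x : ℂ) :
    st11G q α x = ∑' n, ((st11bb q α n : ℝ) : ℂ) * x^n :=
  (st11_entire (st11_SB hq0 hq1 hα)).2 x

include hq0 hq1 hα in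
lemma st11_Fval (x : ℂ) :
    st11F q α x = ∑' n, ((st11aa q α n : ℝ) : ℂ) * x^n :=
  (st11_entire (st11_SA hq0 hq1 hα)).2 x

include hq0 hq1 hα in
lemma st11_shift (x : ℂ) :
    x * st11G q α x = ∑' n, ((st11sb q α n : ℝ) : ℂ) * x^n := by
  calc x * st11G q α x = x * ∑' n, ((st11bb q α n : ℝ) : ℂ) * x^n := by
        rw [st11_Gval hq0 hq1 hα]
    _ = ∑' n, x * (((st11bb q α n : ℝ) : ℂ) * x^n) := tsum_mul_left.symm
    _ = ∑' n, ((st11sb q α (n+1) : ℝ) : ℂ) * x^(n+1) := by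
        refine tsum_congr fun n => ?_
        show _ = ((st11bb q α n : ℝ) : ℂ) * x^(n+1)
        ring
    _ = ((st11sb q α 0 : ℝ) : ℂ) * x^0 + ∑' n, ((st11sb q α (n+1) : ℝ) : ℂ) * x^(n+1) := by
        show _ = ((0:ℝ):ℂ) * x^0 + _
        simp
    _ = ∑' n, ((st11sb q α n : ℝ) : ℂ) * x^n :=
        (Summable.tsum_eq_zero_add (st11_sum_sb hq0 hq1 hα x)).symm

include hq0 hq1 hα in
lemma st11_idE1 (s : ℂ) :
    st11F q α ((q:ℂ)^2 * s) = st11F q α s - s * st11G q α s := by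
  have SF := st11_sumc (st11_SA hq0 hq1 hα) s
  have Ssb := st11_sum_sb hq0 hq1 hα s
  calc st11F q α ((q:ℂ)^2 * s)
      = ∑' n, ((st11aa q α n : ℝ) : ℂ) * ((q:ℂ)^2 * s)^n := st11_Fval hq0 hq1 hα _
    _ = ∑' n, (((st11aa q α n : ℝ) : ℂ) * s^n - ((st11sb q α n : ℝ) : ℂ) * s^n) := by
        refine tsum_congr fun n => ?_
        have h' : ((st11aa q α n : ℝ) : ℂ) * ((q:ℂ)^2)^n
            = ((st11aa q α n : ℝ) : ℂ) - ((st11sb q α n : ℝ) : ℂ) := by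
          exact_mod_cast st11_coeff1 hq0 hq1 hα n
        calc ((st11aa q α n : ℝ) : ℂ) * ((q:ℂ)^2 * s)^n
            = (((st11aa q α n : ℝ) : ℂ) * ((q:ℂ)^2)^n) * s^n := by
              rw [mul_pow]; ring
          _ = _ := by rw [h']; ring
    _ = (∑' n, ((st11aa q α n : ℝ) : ℂ) * s^n) - ∑' n, ((st11sb q α n : ℝ) : ℂ) * s^n :=
        Summable.tsum_sub SF Ssb
    _ = st11F q α s - s * st11G q α s := by
        rw [← st11_Fval hq0 hq1 hα, ← st11_shift hq0 hq1 hα]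

include hq0 hq1 hα in
lemma st11_idE2 (s : ℂ) :
    (q:ℂ) * st11G q α ((q:ℂ)^2 * s)
      = ((q^(2-α) : ℝ) : ℂ) * st11F q α s + ((q^(-α) : ℝ) : ℂ) * st11G q α s
        - ((q^(2-α) : ℝ) : ℂ) * (s * st11G q α s) := by
  have SF := st11_sumc (st11_SA hq0 hq1 hα) s
  have SG := st11_sumc (st11_SB hq0 hq1 hα) s
  have Ssb := st11_sum_sb hq0 hq1 hα s
  calc (q:ℂ) * st11G q α ((q:ℂ)^2 * s)
      = (q:ℂ) * ∑' n, ((st11bb q α n : ℝ) : ℂ) * ((q:ℂ)^2 * s)^n := by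
        rw [st11_Gval hq0 hq1 hα]
    _ = ∑' n, (q:ℂ) * (((st11bb q α n : ℝ) : ℂ) * ((q:ℂ)^2 * s)^n) := tsum_mul_left.symm
    _ = ∑' n, (((q^(2-α) : ℝ) : ℂ) * (((st11aa q α n : ℝ) : ℂ) * s^n)
          + ((q^(-α) : ℝ) : ℂ) * (((st11bb q α n : ℝ) : ℂ) * s^n)
          - ((q^(2-α) : ℝ) : ℂ) * (((st11sb q α n : ℝ) : ℂ) * s^n)) := by
        refine tsum_congr fun n => ?_
        have h' : (q:ℂ) * ((st11bb q α n : ℝ) : ℂ) * ((q:ℂ)^2)^n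
            = ((q^(2-α) : ℝ) : ℂ) * ((st11aa q α n : ℝ) : ℂ)
              + ((q^(-α) : ℝ) : ℂ) * ((st11bb q α n : ℝ) : ℂ)
              - ((q^(2-α) : ℝ) : ℂ) * ((st11sb q α n : ℝ) : ℂ) := by
          exact_mod_cast st11_coeff2 hq0 hq1 hα n
        calc (q:ℂ) * (((st11bb q α n : ℝ) : ℂ) * ((q:ℂ)^2 * s)^n)
            = ((q:ℂ) * ((st11bb q α n : ℝ) : ℂ) * ((q:ℂ)^2)^n) * s^n := by
              rw [mul_pow]; ring
          _ = _ := by rw [h']; ring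
    _ = ((∑' n, ((q^(2-α) : ℝ) : ℂ) * (((st11aa q α n : ℝ) : ℂ) * s^n))
          + ∑' n, ((q^(-α) : ℝ) : ℂ) * (((st11bb q α n : ℝ) : ℂ) * s^n))
          - ∑' n, ((q^(2-α) : ℝ) : ℂ) * (((st11sb q α n : ℝ) : ℂ) * s^n) := by
        rw [Summable.tsum_sub ((SF.mul_left _).add (SG.mul_left _)) (Ssb.mul_left _),
          Summable.tsum_add (SF.mul_left _) (SG.mul_left _)]
    _ = ((q^(2-α) : ℝ) : ℂ) * st11F q α s + ((q^(-α) : ℝ) : ℂ) * st11G q α s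
        - ((q^(2-α) : ℝ) : ℂ) * (s * st11G q α s) := by
        rw [tsum_mul_left, tsum_mul_left, tsum_mul_left, ← st11_Fval hq0 hq1 hα,
          ← st11_Gval hq0 hq1 hα, ← st11_shift hq0 hq1 hα]

end ids


lemma st11_uniq (q α : ℝ) (hq0 : 0 < q) (hq1 : q < 1) (hα : -1 < α) {w z : ℂ → ℂ}
    (hw : DifferentiableAt ℂ w 0) (hz : DifferentiableAt ℂ z 0)
    (hw0 : w 0 = 0) (hz0 : z 0 = 0)
    (h1 : ∀ t : ℂ, w ((q : ℂ) * t) = w t - t * z t)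
    (h2 : ∀ t : ℂ, z ((q : ℂ) * t) =
      t * ((q ^ (2 - α) : ℝ) : ℂ) * w t +
        (((q ^ (-α) : ℝ) : ℂ) - t ^ 2 * ((q ^ (2 - α) : ℝ) : ℂ)) * z t)
    (t : ℂ) : w t = 0 ∧ z t = 0 := by
  set A : ℂ := ((q ^ (-α) : ℝ) : ℂ) with hA
  set B : ℂ := ((q ^ (2 - α) : ℝ) : ℂ) with hB
  set Cq : ℂ := ((q ^ (α : ℝ) : ℝ) : ℂ) with hCq
  have hqα_pos : (0:ℝ) < q ^ (α : ℝ) := Real.rpow_pos_of_pos hq0 _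
  have hCA : Cq * A = 1 := by
    rw [hCq, hA, ← Complex.ofReal_mul, ← Real.rpow_add hq0,
      show α + -α = (0:ℝ) by ring, Real.rpow_zero]
    norm_num
  have hCB : Cq * B = (q : ℂ) ^ 2 := by
    rw [hCq, hB, ← Complex.ofReal_mul, ← Real.rpow_add hq0,
      show α + (2 - α) = (2:ℝ) by ring, Real.rpow_two]
    push_cast
    ring
  -- inverse recursion
  have e1 : ∀ s : ℂ, z ((q:ℂ) * s) = s * B * w ((q:ℂ) * s) + A * z s := by
    intro s
    linear_combination h2 s - s * B * (h1 s)
  have hz' : ∀ s : ℂ, z s = Cq * z ((q:ℂ) * s) - (q:ℂ)^2 * s * w ((q:ℂ) * s) := by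
    intro s
    linear_combination -Cq * (e1 s) - z s * hCA - (s * w ((q:ℂ)*s)) * hCB
  have hw' : ∀ s : ℂ, w s = (1 - (q:ℂ)^2 * s^2) * w ((q:ℂ) * s) + Cq * s * z ((q:ℂ) * s) := by
    intro s
    linear_combination -(h1 s) + s * (hz' s)
  -- norms
  have hnA : ‖Cq‖ = q ^ (α : ℝ) := by
    rw [hCq, Complex.norm_real, Real.norm_eq_abs, abs_of_pos hqα_pos]
  have hnq2 : ‖((q:ℂ))^2‖ = q ^ 2 := by
    rw [norm_pow, Complex.norm_real, Real.norm_eq_abs, abs_of_pos hq0]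
  have nb_z : ∀ s : ℂ, ‖z s‖ ≤ q ^ α * ‖z ((q:ℂ)*s)‖ + q^2 * ‖s‖ * ‖w ((q:ℂ)*s)‖ := by
    intro s
    rw [hz' s]
    refine (norm_sub_le _ _).trans ?_
    rw [norm_mul, hnA, norm_mul, norm_mul, hnq2]
  have nb_w : ∀ s : ℂ, ‖w s‖ ≤ (1 + q^2 * ‖s‖^2) * ‖w ((q:ℂ)*s)‖
      + q ^ α * ‖s‖ * ‖z ((q:ℂ)*s)‖ := by
    intro s
    rw [hw' s]
    calc ‖(1 - (q:ℂ)^2*s^2) * w ((q:ℂ)*s) + Cq * s * z ((q:ℂ)*s)‖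
        ≤ ‖(1 - (q:ℂ)^2*s^2)‖ * ‖w ((q:ℂ)*s)‖ + ‖Cq * s‖ * ‖z ((q:ℂ)*s)‖ := by
          refine (norm_add_le _ _).trans ?_
          rw [norm_mul, norm_mul]
      _ ≤ (1 + q^2*‖s‖^2) * ‖w ((q:ℂ)*s)‖ + q^α*‖s‖ * ‖z ((q:ℂ)*s)‖ := by
          gcongr
          · exact (norm_sub_le _ _).trans (le_of_eq (by rw [norm_one, norm_mul, hnq2, norm_pow]))
          · exact le_of_eq (by rw [norm_mul, hnA])
  -- the sequence
  set Q : ℝ := max 1 (q ^ α) with hQ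
  set D : ℝ := ‖t‖ * (1 + ‖t‖) with hD
  have hQ1 : (1:ℝ) ≤ Q := le_max_left _ _
  have hQα : q ^ α ≤ Q := le_max_right _ _
  have hD0 : 0 ≤ D := by positivity
  set P : ℕ → ℝ := fun k => ‖w ((q:ℂ)^k * t)‖ + ‖z ((q:ℂ)^k * t)‖ with hP
  have hnorm_s : ∀ k : ℕ, ‖(q:ℂ)^k * t‖ = q^k * ‖t‖ := by
    intro k
    rw [norm_mul, norm_pow, Complex.norm_real, Real.norm_eq_abs, abs_of_pos hq0]
  have step : ∀ k : ℕ, P k ≤ Q * (1 + D * q^k) * P (k+1) := by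
    intro k
    have hs : (q:ℂ)^(k+1) * t = (q:ℂ) * ((q:ℂ)^k * t) := by ring
    set s : ℂ := (q:ℂ)^k * t with hsdef
    have hns : ‖s‖ = q^k * ‖t‖ := hnorm_s k
    have hW := nb_w s
    have hZ := nb_z s
    rw [hP]
    simp only [hs]
    set W := ‖w ((q:ℂ) * s)‖
    set Z := ‖z ((q:ℂ) * s)‖
    have hW0 : 0 ≤ W := norm_nonneg _
    have hZ0 : 0 ≤ Z := norm_nonneg _
    have hqk1 : q^k ≤ 1 := pow_le_one₀ hq0.le hq1.le
    have hq21 : q^2 ≤ 1 := pow_le_one₀ hq0.le hq1.le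
    have hsn : 0 ≤ ‖s‖ := norm_nonneg _
    have hst : ‖s‖ ≤ ‖t‖ := by
      rw [hns]; nlinarith [norm_nonneg t]
    have c1 : 1 + q^2 * ‖s‖^2 + q^2 * ‖s‖ ≤ Q * (1 + D * q^k) := by
      have h1' : 1 + q^2 * ‖s‖^2 + q^2 * ‖s‖ ≤ 1 + ‖s‖ * (‖s‖ + 1) := by nlinarith
      have h2' : ‖s‖ * (‖s‖ + 1) ≤ q^k * D := by
        rw [hns, hD]
        have : (0:ℝ) ≤ q^k := by positivity
        nlinarith [norm_nonneg t]
      have h3' : 1 + q^k * D ≤ Q * (1 + D*q^k) := by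
        nlinarith [mul_nonneg hD0 (pow_nonneg hq0.le k)]
      linarith
    have c2 : q ^ α * (1 + ‖s‖) ≤ Q * (1 + D * q^k) := by
      have h2' : ‖s‖ ≤ D * q^k := by
        rw [hns, hD]
        nlinarith [norm_nonneg t, pow_nonneg hq0.le k]
      exact mul_le_mul hQα (by linarith) (by linarith) (by linarith)
    calc ‖w s‖ + ‖z s‖
        ≤ ((1 + q^2 * ‖s‖^2) * W + q^α * ‖s‖ * Z)
          + (q^α * Z + q^2 * ‖s‖ * W) := add_le_add hW hZ
      _ = (1 + q^2*‖s‖^2 + q^2*‖s‖) * W + (q^α * (1 + ‖s‖)) * Z := by ring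
      _ ≤ (Q * (1 + D * q^k)) * W + (Q * (1 + D * q^k)) * Z := by
          gcongr
      _ = Q * (1 + D * q^k) * (W + Z) := by ring
  have hfac0 : ∀ k : ℕ, 0 ≤ Q * (1 + D * q^k) := by
    intro k
    have : (0:ℝ) ≤ D * q^k := by positivity
    nlinarith
  have telescope : ∀ m : ℕ, P 0 ≤ (∏ k ∈ range m, (Q * (1 + D * q^k))) * P m := by
    intro m
    induction m with
    | zero => simp
    | succ m ih =>
      have hprod0 : 0 ≤ ∏ k ∈ range m, (Q * (1 + D * q^k)) :=
        prod_nonneg fun k _ => hfac0 k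
      calc P 0 ≤ (∏ k ∈ range m, (Q * (1 + D * q^k))) * P m := ih
        _ ≤ (∏ k ∈ range m, (Q * (1 + D * q^k))) * (Q * (1 + D * q^m) * P (m+1)) :=
            mul_le_mul_of_nonneg_left (step m) hprod0
        _ = (∏ k ∈ range (m+1), (Q * (1 + D * q^k))) * P (m+1) := by
            rw [prod_range_succ]; ring
  set E : ℝ := Real.exp (D * (1-q)⁻¹) with hE
  have hE0 : 0 < E := Real.exp_pos _
  have prodbound : ∀ m : ℕ, (∏ k ∈ range m, (Q * (1 + D * q^k))) ≤ Q^m * E := by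
    intro m
    rw [prod_mul_distrib, prod_const, card_range]
    refine mul_le_mul_of_nonneg_left ?_ (pow_nonneg (le_trans zero_le_one hQ1) m)
    calc (∏ k ∈ range m, (1 + D * q^k))
        ≤ ∏ k ∈ range m, Real.exp (D * q^k) := by
          refine prod_le_prod (fun k _ => by positivity) (fun k _ => ?_)
          have := Real.add_one_le_exp (D * q^k)
          linarith
      _ = Real.exp (∑ k ∈ range m, D * q^k) := by rw [Real.exp_sum]
      _ ≤ E := by
          rw [hE]
          refine Real.exp_le_exp.2 ?_
          rw [← mul_sum]
          refine mul_le_mul_of_nonneg_left ?_ hD0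
          calc (∑ k ∈ range m, q^k) ≤ ∑' k : ℕ, q^k :=
              Summable.sum_le_tsum _ (fun k _ => by positivity)
                (summable_geometric_of_lt_one hq0.le hq1)
            _ = (1-q)⁻¹ := tsum_geometric_of_lt_one hq0.le hq1
  -- local linear bound
  have hwO : (fun s : ℂ => w s) =O[𝓝 0] (fun s : ℂ => s) := by
    have := hw.isBigO_sub
    simpa [hw0] using this
  have hzO : (fun s : ℂ => z s) =O[𝓝 0] (fun s : ℂ => s) := by
    have := hz.isBigO_sub
    simpa [hz0] using this
  obtain ⟨Cw, hCw⟩ := hwO.bound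
  obtain ⟨Cz, hCz⟩ := hzO.bound
  set C : ℝ := Cw + Cz with hC
  have hloc : ∀ᶠ s : ℂ in 𝓝 0, ‖w s‖ + ‖z s‖ ≤ C * ‖s‖ := by
    filter_upwards [hCw, hCz] with s h1' h2'
    have hn : 0 ≤ ‖s‖ := norm_nonneg _
    rw [hC]
    calc ‖w s‖ + ‖z s‖ ≤ Cw * ‖s‖ + Cz * ‖s‖ := add_le_add h1' h2'
      _ = (Cw + Cz) * ‖s‖ := by ring
  obtain ⟨ε, hε0, hball⟩ := Metric.eventually_nhds_iff.1 hloc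
  -- final limit argument
  have hQq : Q * q < 1 := by
    rcases max_cases 1 (q ^ α) with ⟨h, _⟩ | ⟨h, _⟩
    · rw [hQ, h]; linarith
    · rw [hQ, h]
      have : q ^ α * q = q ^ (α + 1 : ℝ) := by
        rw [Real.rpow_add hq0, Real.rpow_one]
      rw [this]
      exact Real.rpow_lt_one hq0.le hq1 (by linarith)
  have hQq0 : 0 ≤ Q * q := by positivity
  set f : ℕ → ℝ := fun m => (E * (C * ‖t‖)) * (Q*q)^m with hf
  have hft : Tendsto f atTop (𝓝 0) := by
    have := (tendsto_pow_atTop_nhds_zero_of_lt_one hQq0 hQq).const_mul (E * (C * ‖t‖))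
    simpa using this
  have hev : ∀ᶠ m : ℕ in atTop, P 0 ≤ f m := by
    have htend : Tendsto (fun m : ℕ => q^m * ‖t‖) atTop (𝓝 0) := by
      have := (tendsto_pow_atTop_nhds_zero_of_lt_one hq0.le hq1).mul_const ‖t‖
      simpa using this
    filter_upwards [htend.eventually_lt_const hε0] with m hm
    have hPm : P m ≤ C * (q^m * ‖t‖) := by
      have := hball (show dist ((q:ℂ)^m * t) 0 < ε by rw [dist_zero_right, hnorm_s m]; exact hm)
      rwa [hnorm_s m] at this
    have hPm0 : 0 ≤ P m := by simp only [hP]; positivity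
    calc P 0 ≤ (∏ k ∈ range m, (Q * (1 + D * q^k))) * P m := telescope m
      _ ≤ (Q^m * E) * P m := mul_le_mul_of_nonneg_right (prodbound m) hPm0
      _ ≤ (Q^m * E) * (C * (q^m * ‖t‖)) := by
          exact mul_le_mul_of_nonneg_left hPm (mul_nonneg (pow_nonneg (le_trans zero_le_one hQ1) m) hE0.le)
      _ = f m := by rw [hf]; simp only [mul_pow]; ring
  have hP0 : P 0 ≤ 0 := ge_of_tendsto hft hev
  have h0 : P 0 = 0 := le_antisymm hP0 (by simp only [hP]; positivity)
  have hwt : ‖w t‖ = 0 ∧ ‖z t‖ = 0 := by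
    have h00 : P 0 = ‖w t‖ + ‖z t‖ := by rw [hP]; norm_num
    constructor <;> nlinarith [norm_nonneg (w t), norm_nonneg (z t), h00 ▸ h0]
  exact ⟨norm_eq_zero.1 hwt.1, norm_eq_zero.1 hwt.2⟩

/-- existence and uniqueness of the entire power-series solution
`S_A = [u, v]^T` of `S_A(qt) = [[1, -t],[t q^{2-α}, q^{-α} - t² q^{2-α}]] S_A(t)`
with `u` even, `v` odd, `u(0) = 1`. -/
theorem statement11 (q α : ℝ) (hq0 : 0 < q) (hq1 : q < 1) (hα : -1 < α) :
    ∃! p : (ℂ → ℂ) × (ℂ → ℂ),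
      Differentiable ℂ p.1 ∧ Differentiable ℂ p.2 ∧
      (∀ t : ℂ, p.1 (-t) = p.1 t) ∧ (∀ t : ℂ, p.2 (-t) = -p.2 t) ∧ p.1 0 = 1 ∧
      ∀ t : ℂ,
        p.1 ((q : ℂ) * t) = p.1 t - t * p.2 t ∧
        p.2 ((q : ℂ) * t) =
          t * ((q ^ (2 - α) : ℝ) : ℂ) * p.1 t +
            (((q ^ (-α) : ℝ) : ℂ) - t ^ 2 * ((q ^ (2 - α) : ℝ) : ℂ)) * p.2 t := by
  set u : ℂ → ℂ := fun t => st11F q α (t^2) with hu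
  set v : ℂ → ℂ := fun t => t * st11G q α (t^2) with hv
  have hFd : Differentiable ℂ (st11F q α) := (st11_entire (st11_SA hq0 hq1 hα)).1
  have hGd : Differentiable ℂ (st11G q α) := (st11_entire (st11_SB hq0 hq1 hα)).1
  have hud : Differentiable ℂ u := hFd.comp (differentiable_pow 2)
  have hvd : Differentiable ℂ v :=
    differentiable_fun_id.mul (hGd.comp (differentiable_pow 2))
  have huev : ∀ t : ℂ, u (-t) = u t := by
    intro t
    show st11F q α ((-t)^2) = st11F q α (t^2)
    rw [neg_sq]
  have hvodd : ∀ t : ℂ, v (-t) = -v t := by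
    intro t
    show (-t) * st11G q α ((-t)^2) = -(t * st11G q α (t^2))
    rw [neg_sq]; ring
  have hu0 : u 0 = 1 := by
    show st11F q α (0^2) = 1
    rw [show ((0:ℂ))^2 = 0 by ring, st11_Fval hq0 hq1 hα]
    rw [tsum_eq_single 0 (fun n hn => by simp [zero_pow hn])]
    simp [st11aa]
  have hsq : ∀ t : ℂ, ((q:ℂ) * t)^2 = (q:ℂ)^2 * t^2 := fun t => by ring
  have hE1 : ∀ t : ℂ, u ((q:ℂ) * t) = u t - t * v t := by
    intro t
    show st11F q α (((q:ℂ)*t)^2) = st11F q α (t^2) - t * (t * st11G q α (t^2))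
    rw [hsq t, st11_idE1 hq0 hq1 hα (t^2)]
    ring
  have hE2 : ∀ t : ℂ, v ((q:ℂ) * t) =
      t * ((q ^ (2 - α) : ℝ) : ℂ) * u t +
        (((q ^ (-α) : ℝ) : ℂ) - t ^ 2 * ((q ^ (2 - α) : ℝ) : ℂ)) * v t := by
    intro t
    show ((q:ℂ)*t) * st11G q α (((q:ℂ)*t)^2)
        = t * ((q ^ (2 - α) : ℝ) : ℂ) * st11F q α (t^2) +
          (((q ^ (-α) : ℝ) : ℂ) - t ^ 2 * ((q ^ (2 - α) : ℝ) : ℂ)) * (t * st11G q α (t^2))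
    rw [hsq t]
    have h := st11_idE2 hq0 hq1 hα (t^2)
    linear_combination t * h
  refine ⟨⟨u, v⟩, ⟨hud, hvd, huev, hvodd, hu0, fun t => ⟨hE1 t, hE2 t⟩⟩, ?_⟩
  rintro ⟨u', v'⟩ ⟨hd1, hd2, -, hod', h0', heq'⟩
  have hv0 : v 0 = 0 := by simp [hv]
  have hv0' : v' 0 = 0 := by
    have h1' := hod' 0
    simp only [neg_zero] at h1'
    have h2 : (2:ℂ) * v' 0 = 0 := by linear_combination h1'
    rcases mul_eq_zero.mp h2 with h | h
    · norm_num at h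
    · exact h
  have key : ∀ t : ℂ, (u' t - u t) = 0 ∧ (v' t - v t) = 0 := by
    intro t
    refine st11_uniq q α hq0 hq1 hα
      ((hd1.sub hud).differentiableAt) ((hd2.sub hvd).differentiableAt)
      (by simp [hu0, show u' 0 = 1 from h0']) (by simp [hv0, show v' 0 = 0 from hv0']) ?_ ?_ t
    · intro s
      have a1 := (heq' s).1
      have a2 := hE1 s
      simp only [Pi.sub_apply]
      linear_combination a1 - a2
    · intro s
      have a1 := (heq' s).2
      have a2 := hE2 s
      simp only [Pi.sub_apply]
      linear_combination a1 - a2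
  simp only [Prod.mk.injEq]
  constructor
  · funext t; exact sub_eq_zero.mp (key t).1
  · funext t; exact sub_eq_zero.mp (key t).2
end

section
/- There exists a unique pair of entire functions u, v : ℂ → ℂ such that u is odd, v is even, v(0) = 1, and for all t ∈ ℂ: u(qt) = q^α u(t) − t q^α v(t) and v(qt) = t q² u(t) + (1 − t² q²) v(t). (This is the entire power-series solution S_B = [u, v]^T of the q-difference system S_B(qt) = [[q^α, −t q^α],[t q², 1 − t² q²]] S_B(t).) -/
open Filter Topology FormalMultilinearSeries
open scoped NNReal

namespace Statement12Aux

/-! ### Coefficient sequences -/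

/-- coefficients of `v` (zero at odd indices). -/
noncomputable def bc (q α : ℝ) : ℕ → ℂ
  | 0 => 1
  | 1 => 0
  | (n+2) => ((q:ℂ)^(n+3) / (((q:ℂ)^(n+2) - 1) * (((q ^ α : ℝ) : ℂ) - (q:ℂ)^(n+1)))) * bc q α n

/-- coefficients of `u` (zero at even indices). -/
noncomputable def ac (q α : ℝ) : ℕ → ℂ
  | 0 => 0
  | (n+1) => (((q ^ α : ℝ) : ℂ) / (((q ^ α : ℝ) : ℂ) - (q:ℂ)^(n+1))) * bc q α n

/-- shift of a coefficient sequence (multiplication by `t`). -/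
def sh (c : ℕ → ℂ) : ℕ → ℂ
  | 0 => 0
  | (n+1) => c n

lemma bc_odd (q α : ℝ) : ∀ n, Odd n → bc q α n = 0 := by
  have key : ∀ k, bc q α (2*k+1) = 0 := by
    intro k
    induction k with
    | zero => rfl
    | succ m ih =>
        have h : 2*(m+1)+1 = (2*m+1)+2 := by omega
        rw [h, bc, ih, mul_zero]
  rintro n ⟨k, hk⟩
  have : n = 2*k+1 := by omega
  rw [this]; exact key k

lemma ac_even (q α : ℝ) : ∀ n, Even n → ac q α n = 0 := by
  rintro n hn
  match n, hn with
  | 0, _ => rfl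
  | (m+1), hn =>
      have hm : Odd m := Nat.Even.sub_odd (by omega) hn odd_one
      rw [ac, bc_odd q α m hm, mul_zero]

variable {q α : ℝ}

/-! ### Recurrence relations -/

lemma rec_a (hD2 : ∀ n : ℕ, Odd n → ((q ^ α : ℝ) : ℂ) - (q:ℂ)^n ≠ 0) (n : ℕ) :
    (((q ^ α : ℝ) : ℂ) - (q:ℂ)^(n+1)) * ac q α (n+1) = ((q ^ α : ℝ) : ℂ) * bc q α n := by
  rcases Nat.even_or_odd n with he | ho
  · have hD := hD2 (n+1) (Even.add_one he)
    rw [ac]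
    field_simp
  · rw [ac, bc_odd q α n ho, mul_zero, mul_zero, mul_zero]

lemma rec1 (hD2 : ∀ n : ℕ, Odd n → ((q ^ α : ℝ) : ℂ) - (q:ℂ)^n ≠ 0) (n : ℕ) :
    (q:ℂ)^n * ac q α n =
    ((q ^ α : ℝ) : ℂ) * ac q α n - ((q ^ α : ℝ) : ℂ) * sh (bc q α) n := by
  cases n with
  | zero => simp [ac, sh]
  | succ m =>
      have h := rec_a hD2 m
      show _ = _ - _ * sh (bc q α) (m+1)
      rw [show sh (bc q α) (m+1) = bc q α m from rfl]
      linear_combination -h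

lemma rec2 (hD1 : ∀ n : ℕ, 1 ≤ n → ((q:ℂ)^n - 1) ≠ 0)
    (hD2 : ∀ n : ℕ, Odd n → ((q ^ α : ℝ) : ℂ) - (q:ℂ)^n ≠ 0) (n : ℕ) :
    (q:ℂ)^n * bc q α n =
    (q:ℂ)^2 * sh (ac q α) n + bc q α n - (q:ℂ)^2 * sh (sh (bc q α)) n := by
  match n with
  | 0 => simp [bc, sh]
  | 1 => simp [bc, ac, sh]
  | (m+2) =>
      rw [show sh (ac q α) (m+2) = ac q α (m+1) from rfl,
          show sh (sh (bc q α)) (m+2) = bc q α m from rfl]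
      rcases Nat.even_or_odd m with he | ho
      · have hd1 := hD1 (m+2) (by omega)
        have hd2 := hD2 (m+1) (Even.add_one he)
        rw [bc, ac]
        field_simp
        ring
      · rw [bc, ac, bc_odd q α m ho]
        ring

/-! ### Uniqueness of coefficient sequences -/

lemma coeff_unique
    (hD1 : ∀ n : ℕ, 1 ≤ n → ((q:ℂ)^n - 1) ≠ 0)
    (hD2 : ∀ n : ℕ, Odd n → ((q ^ α : ℝ) : ℂ) - (q:ℂ)^n ≠ 0)
    (a' b' : ℕ → ℂ)
    (ha : ∀ n, Even n → a' n = 0) (hb : ∀ n, Odd n → b' n = 0) (hb0 : b' 0 = 1)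
    (h1 : ∀ n, (q:ℂ)^n * a' n = ((q ^ α : ℝ) : ℂ) * a' n - ((q ^ α : ℝ) : ℂ) * sh b' n)
    (h2 : ∀ n, (q:ℂ)^n * b' n =
      (q:ℂ)^2 * sh a' n + b' n - (q:ℂ)^2 * sh (sh b') n) :
    a' = ac q α ∧ b' = bc q α := by
  have stepa : ∀ n, b' n = bc q α n → a' (n+1) = ac q α (n+1) := by
    intro n hn
    rcases Nat.even_or_odd (n+1) with he | ho
    · rw [ha _ he, ac_even q α _ he]
    · have hD := hD2 _ ho
      apply mul_left_cancel₀ hD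
      have e1 := h1 (n+1)
      rw [show sh b' (n+1) = b' n from rfl] at e1
      have e2 := rec_a hD2 n
      rw [← hn] at e2
      linear_combination -e1 - e2
  have stepb : ∀ n, b' n = bc q α n → a' (n+1) = ac q α (n+1) → b' (n+2) = bc q α (n+2) := by
    intro n hbn hAn
    apply mul_left_cancel₀ (hD1 (n+2) (by omega))
    have e1 := h2 (n+2)
    rw [show sh a' (n+2) = a' (n+1) from rfl, show sh (sh b') (n+2) = b' n from rfl] at e1
    have e2 := rec2 hD1 hD2 (n+2)
    rw [show sh (ac q α) (n+2) = ac q α (n+1) from rfl,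
        show sh (sh (bc q α)) (n+2) = bc q α n from rfl] at e2
    linear_combination e1 - e2 + (q:ℂ)^2 * hAn - (q:ℂ)^2 * hbn
  have hbeq : ∀ n, b' n = bc q α n ∧ b' (n+1) = bc q α (n+1) := by
    intro n
    induction n with
    | zero => exact ⟨by rw [hb0]; rfl, by rw [hb 1 odd_one, bc_odd q α 1 odd_one]⟩
    | succ m ih => exact ⟨ih.2, stepb m ih.1 (stepa m ih.1)⟩
  refine ⟨funext fun n => ?_, funext fun n => (hbeq n).1⟩
  cases n with
  | zero => rw [ha 0 Even.zero]; rfl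
  | succ m => exact stepa m (hbeq m).1

/-! ### Summability -/

lemma tendsto_qpow (hq0 : 0 < q) (hq1 : q < 1) :
    Tendsto (fun n : ℕ => (q:ℂ)^n) atTop (𝓝 0) := by
  apply tendsto_pow_atTop_nhds_zero_of_norm_lt_one
  rw [Complex.norm_real, Real.norm_eq_abs, abs_of_pos hq0]
  exact hq1

lemma Qa_ne_zero (hq0 : 0 < q) : ((q ^ α : ℝ) : ℂ) ≠ 0 :=
  Complex.ofReal_ne_zero.mpr (Real.rpow_pos_of_pos hq0 α).ne'

lemma tendsto_e (hq0 : 0 < q) (hq1 : q < 1) :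
    Tendsto (fun n : ℕ =>
      ‖(q:ℂ)^(n+3) / (((q:ℂ)^(n+2) - 1) * (((q ^ α : ℝ) : ℂ) - (q:ℂ)^(n+1)))‖)
      atTop (𝓝 0) := by
  have h0 := tendsto_qpow hq0 hq1
  have hnum : Tendsto (fun n : ℕ => (q:ℂ)^(n+3)) atTop (𝓝 0) :=
    h0.comp (tendsto_add_atTop_nat 3)
  have hden : Tendsto (fun n : ℕ => ((q:ℂ)^(n+2) - 1) * (((q ^ α : ℝ) : ℂ) - (q:ℂ)^(n+1)))
      atTop (𝓝 ((0 - 1) * (((q ^ α : ℝ) : ℂ) - 0))) :=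
    ((h0.comp (tendsto_add_atTop_nat 2)).sub_const 1).mul
      (tendsto_const_nhds.sub (h0.comp (tendsto_add_atTop_nat 1)))
  have hne : ((0:ℂ) - 1) * (((q ^ α : ℝ) : ℂ) - 0) ≠ 0 := by
    simp [Qa_ne_zero hq0]
  have := (hnum.div hden hne).norm
  simpa using this

lemma summable_bc (hq0 : 0 < q) (hq1 : q < 1) {r : ℝ} (hr : 0 ≤ r) :
    Summable (fun n => ‖bc q α n‖ * r^n) := by
  have ht := tendsto_e (α := α) hq0 hq1
  have hev : ∀ᶠ n in atTop,
      ‖(q:ℂ)^(n+3) / (((q:ℂ)^(n+2) - 1) * (((q ^ α : ℝ) : ℂ) - (q:ℂ)^(n+1)))‖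
        ≤ 1/(2*(r^2+1)) :=
    ht.eventually (eventually_le_nhds (by positivity))
  have h2k : Tendsto (fun k : ℕ => 2*k) atTop atTop :=
    tendsto_atTop_atTop_of_monotone (fun a b h => by omega) (fun b => ⟨b, by omega⟩)
  have heven : Summable (fun k => ‖bc q α (2*k)‖ * r^(2*k)) := by
    apply summable_of_ratio_norm_eventually_le (r := 1/2) (by norm_num)
    filter_upwards [h2k.eventually hev] with k hk
    rw [Real.norm_of_nonneg (by positivity), Real.norm_of_nonneg (by positivity),
        show 2*(k+1) = (2*k)+2 by ring, bc, norm_mul]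
    have key : ‖(q:ℂ)^(2*k+3) / (((q:ℂ)^(2*k+2) - 1) * (((q ^ α : ℝ) : ℂ) - (q:ℂ)^(2*k+1)))‖
        * r^2 ≤ 1/2 := by
      calc _ ≤ (1/(2*(r^2+1))) * r^2 := by
              apply mul_le_mul_of_nonneg_right hk (by positivity)
        _ ≤ 1/2 := by
              rw [div_mul_eq_mul_div, div_le_div_iff₀ (by positivity) (by norm_num)]
              nlinarith [sq_nonneg r]
    calc ‖(q:ℂ)^(2*k+3) / (((q:ℂ)^(2*k+2) - 1) * (((q ^ α : ℝ) : ℂ) - (q:ℂ)^(2*k+1)))‖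
          * ‖bc q α (2*k)‖ * r^(2*k+2)
        = (‖(q:ℂ)^(2*k+3) / (((q:ℂ)^(2*k+2) - 1) * (((q ^ α : ℝ) : ℂ) - (q:ℂ)^(2*k+1)))‖ * r^2)
            * (‖bc q α (2*k)‖ * r^(2*k)) := by ring
      _ ≤ (1/2) * (‖bc q α (2*k)‖ * r^(2*k)) :=
          mul_le_mul_of_nonneg_right key (by positivity)
  have hinj : Function.Injective (fun k : ℕ => 2*k) := fun a b h => by simpa using h
  have hzero : ∀ x ∉ Set.range (fun k : ℕ => 2*k), ‖bc q α x‖ * r^x = 0 := by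
    intro x hx
    have hxodd : Odd x := by
      rcases Nat.even_or_odd x with he | ho
      · exfalso; obtain ⟨m, hm⟩ := he; exact hx ⟨m, by simp; omega⟩
      · exact ho
    rw [bc_odd q α x hxodd]
    simp
  exact (Function.Injective.summable_iff hinj hzero).mp heven

lemma summable_ac (hq0 : 0 < q) (hq1 : q < 1) {r : ℝ} (hr : 0 ≤ r) :
    Summable (fun n => ‖ac q α n‖ * r^n) := by
  rw [← summable_nat_add_iff 1]
  have h0 := tendsto_qpow hq0 hq1
  have hw : Tendsto (fun n : ℕ => ‖((q ^ α : ℝ) : ℂ) / (((q ^ α : ℝ) : ℂ) - (q:ℂ)^(n+1))‖)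
      atTop (𝓝 1) := by
    have hden : Tendsto (fun n : ℕ => (((q ^ α : ℝ) : ℂ) - (q:ℂ)^(n+1))) atTop
        (𝓝 (((q ^ α : ℝ) : ℂ) - 0)) :=
      tendsto_const_nhds.sub (h0.comp (tendsto_add_atTop_nat 1))
    have hne : (((q ^ α : ℝ) : ℂ) - 0) ≠ 0 := by simp [Qa_ne_zero hq0]
    have := (Tendsto.div (tendsto_const_nhds (x := ((q ^ α : ℝ) : ℂ))) hden hne).norm
    simpa [div_self (Qa_ne_zero (α := α) hq0)] using this
  have hev : ∀ᶠ n in atTop,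
      ‖((q ^ α : ℝ) : ℂ) / (((q ^ α : ℝ) : ℂ) - (q:ℂ)^(n+1))‖ ≤ 2 :=
    hw.eventually (eventually_le_nhds one_lt_two)
  apply Summable.of_norm_bounded_eventually (g := fun n => (2*r) * (‖bc q α n‖ * r^n))
    ((summable_bc hq0 hq1 hr).mul_left _)
  rw [Nat.cofinite_eq_atTop]
  filter_upwards [hev] with n hn
  rw [Real.norm_of_nonneg (by positivity), ac, norm_mul]
  calc ‖((q ^ α : ℝ) : ℂ) / (((q ^ α : ℝ) : ℂ) - (q:ℂ)^(n+1))‖ * ‖bc q α n‖ * r^(n+1)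
      ≤ 2 * ‖bc q α n‖ * r^(n+1) :=
        mul_le_mul_of_nonneg_right (mul_le_mul_of_nonneg_right hn (norm_nonneg _)) (by positivity)
    _ = (2*r) * (‖bc q α n‖ * r^n) := by ring

/-! ### Entire functions from coefficients -/

variable {c : ℕ → ℂ}

lemma ofScalars_coeff (n : ℕ) : (ofScalars ℂ c).coeff n = c n := by
  show ofScalars ℂ c n (fun _ => 1) = c n
  rw [ofScalars_apply_eq]
  simp

lemma radius_top (hc : ∀ r : ℝ≥0, Summable (fun n => ‖c n‖ * (r:ℝ)^n)) :
    (ofScalars ℂ c).radius = ⊤ :=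
  FormalMultilinearSeries.radius_eq_top_of_summable_norm _
    (fun r => by simpa [ofScalars_norm, ofScalars_coeff] using hc r)

lemma hasBall (hc : ∀ r : ℝ≥0, Summable (fun n => ‖c n‖ * (r:ℝ)^n)) :
    HasFPowerSeriesOnBall (ofScalarsSum c) (ofScalars ℂ c) 0 ⊤ := by
  rw [← radius_top hc]
  exact (ofScalars ℂ c).hasFPowerSeriesOnBall (by rw [radius_top hc]; exact ENNReal.zero_lt_top)

lemma hasSum_ofScalarsSum (hc : ∀ r : ℝ≥0, Summable (fun n => ‖c n‖ * (r:ℝ)^n)) (t : ℂ) :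
    HasSum (fun n => c n * t^n) (ofScalarsSum c t) := by
  have h := (hasBall hc).hasSum (y := t) (EMetric.mem_ball.mpr (edist_lt_top t 0))
  simpa [ofScalars_apply_eq, ofScalars_coeff, smul_eq_mul, zero_add, mul_comm] using h

lemma differentiable_ofScalarsSum (hc : ∀ r : ℝ≥0, Summable (fun n => ‖c n‖ * (r:ℝ)^n)) :
    Differentiable ℂ (ofScalarsSum (E := ℂ) c) := fun t =>
  ((hasBall hc).analyticAt_of_mem (EMetric.mem_ball.mpr (edist_lt_top t 0))).differentiableAt

/-- uniqueness of scalar power series coefficients from eventual `HasSum` representations. -/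
lemma coeff_ext {c d : ℕ → ℂ} {f : ℂ → ℂ}
    (hf : ∀ᶠ t in 𝓝 (0:ℂ), HasSum (fun n => c n * t^n) (f t))
    (hg : ∀ᶠ t in 𝓝 (0:ℂ), HasSum (fun n => d n * t^n) (f t)) : c = d := by
  have h1 : HasFPowerSeriesAt f (ofScalars ℂ c) 0 := by
    rw [hasFPowerSeriesAt_iff]
    filter_upwards [hf] with t ht
    simpa [ofScalars_coeff, smul_eq_mul, zero_add, mul_comm] using ht
  have h2 : HasFPowerSeriesAt f (ofScalars ℂ d) 0 := by
    rw [hasFPowerSeriesAt_iff]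
    filter_upwards [hg] with t ht
    simpa [ofScalars_coeff, smul_eq_mul, zero_add, mul_comm] using ht
  exact (ofScalars_series_eq_iff ℂ c d).mp (h1.eq_formalMultilinearSeries h2)

lemma hasSum_sh {b : ℕ → ℂ} {t S : ℂ} (h : HasSum (fun n => b n * t^n) S) :
    HasSum (fun n => sh b n * t^n) (t * S) := by
  have h2 : HasSum (fun n => sh b (n+1) * t^(n+1)) (t * S) := by
    have heq : (fun n => sh b (n+1) * t^(n+1)) = fun n => t * (b n * t^n) := by
      funext n; show b n * t^(n+1) = _; ring
    rw [heq]
    exact h.mul_left t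
  exact (hasSum_nat_add_iff' 1).mp (by simpa [sh] using h2)

end Statement12Aux

open Statement12Aux

/-- existence and uniqueness of the entire power-series solution
`S_B = [u, v]^T` of `S_B(qt) = [[q^α, -t q^α],[t q², 1 - t² q²]] S_B(t)`
with `u` odd, `v` even, `v(0) = 1`. -/
theorem statement12 (q α : ℝ) (hq0 : 0 < q) (hq1 : q < 1) (hα : -1 < α)
    (hodd : ∀ j : ℕ, α ≠ 2 * (j : ℝ) + 1) :
    ∃! p : (ℂ → ℂ) × (ℂ → ℂ),
      Differentiable ℂ p.1 ∧ Differentiable ℂ p.2 ∧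
      (∀ t : ℂ, p.1 (-t) = -p.1 t) ∧ (∀ t : ℂ, p.2 (-t) = p.2 t) ∧ p.2 0 = 1 ∧
      ∀ t : ℂ,
        p.1 ((q : ℂ) * t) = ((q ^ α : ℝ) : ℂ) * p.1 t - t * ((q ^ α : ℝ) : ℂ) * p.2 t ∧
        p.2 ((q : ℂ) * t) = t * (q : ℂ) ^ 2 * p.1 t + (1 - t ^ 2 * (q : ℂ) ^ 2) * p.2 t := by
  -- non-vanishing of the denominators
  have hD1 : ∀ n : ℕ, 1 ≤ n → ((q:ℂ)^n - 1) ≠ 0 := by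
    intro n hn
    have h1 : q ^ n < 1 := pow_lt_one₀ hq0.le hq1 (by omega)
    have : (q:ℂ)^n ≠ 1 := by
      rw [show ((q:ℂ)^n) = ((q^n : ℝ) : ℂ) by push_cast; ring]
      exact_mod_cast h1.ne
    exact sub_ne_zero.mpr this
  have hD2 : ∀ n : ℕ, Odd n → ((q ^ α : ℝ) : ℂ) - (q:ℂ)^n ≠ 0 := by
    intro n hn
    have hne : q ^ α ≠ q ^ n := by
      intro h
      have h2 : q ^ α = q ^ (n:ℝ) := by rw [h, Real.rpow_natCast]
      have h3 : α = (n:ℝ) := by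
        rcases lt_trichotomy α (n:ℝ) with hl | he | hg
        · exact absurd h2 ((Real.rpow_lt_rpow_left_iff_of_base_lt_one hq0 hq1).mpr hl).ne'
        · exact he
        · exact absurd h2 ((Real.rpow_lt_rpow_left_iff_of_base_lt_one hq0 hq1).mpr hg).ne
      obtain ⟨j, hj⟩ := hn
      exact hodd j (by rw [h3, hj]; push_cast; ring)
    rw [sub_ne_zero, show ((q:ℂ)^n) = ((q^n : ℝ) : ℂ) by push_cast; ring]
    exact_mod_cast hne
  -- summability of the coefficient series
  have hsa : ∀ r : ℝ≥0, Summable (fun n => ‖ac q α n‖ * (r:ℝ)^n) :=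
    fun r => summable_ac hq0 hq1 r.coe_nonneg
  have hsb : ∀ r : ℝ≥0, Summable (fun n => ‖bc q α n‖ * (r:ℝ)^n) :=
    fun r => summable_bc hq0 hq1 r.coe_nonneg
  set U : ℂ → ℂ := ofScalarsSum (E := ℂ) (ac q α) with hUdef
  set V : ℂ → ℂ := ofScalarsSum (E := ℂ) (bc q α) with hVdef
  have hU : ∀ t : ℂ, HasSum (fun n => ac q α n * t^n) (U t) := hasSum_ofScalarsSum hsa
  have hV : ∀ t : ℂ, HasSum (fun n => bc q α n * t^n) (V t) := hasSum_ofScalarsSum hsb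
  -- properties of the witness
  have hUodd : ∀ t : ℂ, U (-t) = -U t := by
    intro t
    have h1 := hU (-t)
    have heq : (fun n => ac q α n * (-t)^n) = (fun n => -(ac q α n * t^n)) := by
      funext n
      rcases Nat.even_or_odd n with he | ho
      · rw [ac_even q α n he]; ring
      · rw [ho.neg_pow]; ring
    rw [heq] at h1
    exact h1.unique (hU t).neg
  have hVeven : ∀ t : ℂ, V (-t) = V t := by
    intro t
    have h1 := hV (-t)
    have heq : (fun n => bc q α n * (-t)^n) = (fun n => bc q α n * t^n) := by
      funext n
      rcases Nat.even_or_odd n with he | ho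
      · rw [he.neg_pow]
      · rw [bc_odd q α n ho]; ring
    rw [heq] at h1
    exact h1.unique (hV t)
  have hV0 : V 0 = 1 := by
    have h1 := hV 0
    have heq : (fun n => bc q α n * (0:ℂ)^n) = (fun n => if n = 0 then (1:ℂ) else 0) := by
      funext n
      cases n with
      | zero => simp [bc]
      | succ m => simp
    rw [heq] at h1
    exact h1.unique (hasSum_ite_eq 0 1)
  have heq1 : ∀ t : ℂ, U ((q:ℂ)*t) =
      ((q ^ α : ℝ) : ℂ) * U t - t * ((q ^ α : ℝ) : ℂ) * V t := by
    intro t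
    have h1 := hU ((q:ℂ)*t)
    have heq : (fun n => ac q α n * ((q:ℂ)*t)^n)
        = (fun n => ((q ^ α : ℝ) : ℂ) * (ac q α n * t^n)
            - ((q ^ α : ℝ) : ℂ) * (sh (bc q α) n * t^n)) := by
      funext n
      rw [mul_pow, show ac q α n * ((q:ℂ)^n * t^n) = ((q:ℂ)^n * ac q α n) * t^n by ring,
          rec1 hD2 n]
      ring
    rw [heq] at h1
    have h2 := ((hU t).mul_left ((q ^ α : ℝ) : ℂ)).sub
      ((hasSum_sh (hV t)).mul_left ((q ^ α : ℝ) : ℂ))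
    have := h1.unique h2
    rw [this]; ring
  have heq2 : ∀ t : ℂ, V ((q:ℂ)*t) =
      t * (q:ℂ)^2 * U t + (1 - t^2 * (q:ℂ)^2) * V t := by
    intro t
    have h1 := hV ((q:ℂ)*t)
    have heq : (fun n => bc q α n * ((q:ℂ)*t)^n)
        = (fun n => ((q:ℂ)^2 * (sh (ac q α) n * t^n) + bc q α n * t^n)
            - (q:ℂ)^2 * (sh (sh (bc q α)) n * t^n)) := by
      funext n
      rw [mul_pow, show bc q α n * ((q:ℂ)^n * t^n) = ((q:ℂ)^n * bc q α n) * t^n by ring,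
          rec2 hD1 hD2 n]
      ring
    rw [heq] at h1
    have h2 := (((hasSum_sh (hU t)).mul_left ((q:ℂ)^2)).add (hV t)).sub
      ((hasSum_sh (hasSum_sh (hV t))).mul_left ((q:ℂ)^2))
    have := h1.unique h2
    rw [this]; ring
  refine ⟨(U, V), ⟨differentiable_ofScalarsSum hsa, differentiable_ofScalarsSum hsb,
    hUodd, hVeven, hV0, fun t => ⟨heq1 t, heq2 t⟩⟩, ?_⟩
  -- uniqueness
  rintro ⟨u, v⟩ ⟨hdu, hdv, huodd, hveven, hv0, heqs⟩
  dsimp only at hdu hdv huodd hveven hv0 heqs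
  -- power series of u and v at 0
  obtain ⟨pu, hpu⟩ := (hdu.analyticAt 0)
  obtain ⟨pv, hpv⟩ := (hdv.analyticAt 0)
  set a' : ℕ → ℂ := pu.coeff with ha'def
  set b' : ℕ → ℂ := pv.coeff with hb'def
  have hA : ∀ᶠ t in 𝓝 (0:ℂ), HasSum (fun n => a' n * t^n) (u t) := by
    filter_upwards [hasFPowerSeriesAt_iff.mp hpu] with t ht
    simpa [smul_eq_mul, mul_comm, zero_add] using ht
  have hB : ∀ᶠ t in 𝓝 (0:ℂ), HasSum (fun n => b' n * t^n) (v t) := by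
    filter_upwards [hasFPowerSeriesAt_iff.mp hpv] with t ht
    simpa [smul_eq_mul, mul_comm, zero_add] using ht
  have hnegmap : Tendsto (fun t : ℂ => -t) (𝓝 0) (𝓝 0) := by
    simpa using (continuous_neg (G := ℂ)).tendsto 0
  have hqmap : Tendsto (fun t : ℂ => (q:ℂ)*t) (𝓝 0) (𝓝 0) := by
    simpa using (continuous_mul_left (q:ℂ)).tendsto 0
  -- parity of coefficients
  have haeven : ∀ n, Even n → a' n = 0 := by
    have hc := coeff_ext (f := fun t => u (-t)) (c := fun n => a' n * (-1)^n)
      (d := fun n => -a' n) ?_ ?_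
    · intro n hn
      have := congrFun hc n
      rw [hn.neg_one_pow, mul_one] at this
      have h2 : (2:ℂ) * a' n = 0 := by linear_combination this
      simpa using (mul_eq_zero.mp h2).resolve_left (by norm_num)
    · filter_upwards [hnegmap.eventually hA] with t ht
      have heq : (fun n => (a' n * (-1)^n) * t^n) = fun n => a' n * (-t)^n := by
        funext n; rw [neg_pow]; ring
      rw [heq]
      exact ht
    · filter_upwards [hA] with t ht
      have := ht.neg
      rw [← huodd t] at this
      have heq : (fun n => -(a' n * t^n)) = fun n => (-a' n) * t^n := by
        funext n; ring
      rwa [heq] at this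
  have hbodd : ∀ n, Odd n → b' n = 0 := by
    have hc := coeff_ext (f := fun t => v (-t)) (c := fun n => b' n * (-1)^n)
      (d := fun n => b' n) ?_ ?_
    · intro n hn
      have := congrFun hc n
      rw [hn.neg_one_pow] at this
      have h2 : (2:ℂ) * b' n = 0 := by linear_combination -this
      simpa using (mul_eq_zero.mp h2).resolve_left (by norm_num)
    · filter_upwards [hnegmap.eventually hB] with t ht
      have heq : (fun n => (b' n * (-1)^n) * t^n) = fun n => b' n * (-t)^n := by
        funext n; rw [neg_pow]; ring
      rw [heq]
      exact ht
    · filter_upwards [hB] with t ht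
      rwa [← hveven t] at ht
  have hb0 : b' 0 = 1 := by
    have := hpv.coeff_zero 1
    rw [hb'def]
    show pv 0 (fun _ => 1) = 1
    rw [show (fun _ : Fin 0 => (1:ℂ)) = 1 from rfl, this, hv0]
  -- recurrences for the coefficients
  have h1' : ∀ n, (q:ℂ)^n * a' n =
      ((q ^ α : ℝ) : ℂ) * a' n - ((q ^ α : ℝ) : ℂ) * sh b' n := by
    have hc := coeff_ext (f := fun t => u ((q:ℂ)*t))
      (c := fun n => (q:ℂ)^n * a' n)
      (d := fun n => ((q ^ α : ℝ) : ℂ) * a' n - ((q ^ α : ℝ) : ℂ) * sh b' n) ?_ ?_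
    · exact fun n => congrFun hc n
    · filter_upwards [hqmap.eventually hA] with t ht
      have heq : (fun n => ((q:ℂ)^n * a' n) * t^n) = fun n => a' n * ((q:ℂ)*t)^n := by
        funext n; rw [mul_pow]; ring
      rw [heq]
      exact ht
    · filter_upwards [hA, hB] with t htA htB
      have h2 := (htA.mul_left ((q ^ α : ℝ) : ℂ)).sub
        ((hasSum_sh htB).mul_left ((q ^ α : ℝ) : ℂ))
      have hval : ((q ^ α : ℝ) : ℂ) * u t - ((q ^ α : ℝ) : ℂ) * (t * v t)
          = u ((q:ℂ)*t) := by rw [(heqs t).1]; ring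
      rw [hval] at h2
      have heq : (fun n => (((q ^ α : ℝ) : ℂ) * a' n - ((q ^ α : ℝ) : ℂ) * sh b' n) * t^n)
          = fun n => ((q ^ α : ℝ) : ℂ) * (a' n * t^n) - ((q ^ α : ℝ) : ℂ) * (sh b' n * t^n) := by
        funext n; ring
      rw [heq]
      exact h2
  have h2' : ∀ n, (q:ℂ)^n * b' n =
      (q:ℂ)^2 * sh a' n + b' n - (q:ℂ)^2 * sh (sh b') n := by
    have hc := coeff_ext (f := fun t => v ((q:ℂ)*t))
      (c := fun n => (q:ℂ)^n * b' n)
      (d := fun n => (q:ℂ)^2 * sh a' n + b' n - (q:ℂ)^2 * sh (sh b') n) ?_ ?_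
    · exact fun n => congrFun hc n
    · filter_upwards [hqmap.eventually hB] with t ht
      have heq : (fun n => ((q:ℂ)^n * b' n) * t^n) = fun n => b' n * ((q:ℂ)*t)^n := by
        funext n; rw [mul_pow]; ring
      rw [heq]
      exact ht
    · filter_upwards [hA, hB] with t htA htB
      have h2 := (((hasSum_sh htA).mul_left ((q:ℂ)^2)).add htB).sub
        ((hasSum_sh (hasSum_sh htB)).mul_left ((q:ℂ)^2))
      have hval : (q:ℂ)^2 * (t * u t) + v t - (q:ℂ)^2 * (t * (t * v t))
          = v ((q:ℂ)*t) := by rw [(heqs t).2]; ring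
      rw [hval] at h2
      have heq : (fun n => ((q:ℂ)^2 * sh a' n + b' n - (q:ℂ)^2 * sh (sh b') n) * t^n)
          = fun n => ((q:ℂ)^2 * (sh a' n * t^n) + b' n * t^n)
              - (q:ℂ)^2 * (sh (sh b') n * t^n) := by
        funext n; ring
      rw [heq]
      exact h2
  obtain ⟨haeq, hbeq⟩ := coeff_unique hD1 hD2 a' b' haeven hbodd hb0 h1' h2'
  -- identity theorem
  have huU : u = U := by
    apply AnalyticOnNhd.eq_of_eventuallyEq (𝕜 := ℂ)
      (fun z _ => hdu.analyticAt z)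
      (fun z _ => (differentiable_ofScalarsSum hsa).analyticAt z)
      (z₀ := (0:ℂ))
    filter_upwards [hA] with t ht
    rw [haeq] at ht
    exact ht.unique (hU t)
  have hvV : v = V := by
    apply AnalyticOnNhd.eq_of_eventuallyEq (𝕜 := ℂ)
      (fun z _ => hdv.analyticAt z)
      (fun z _ => (differentiable_ofScalarsSum hsb).analyticAt z)
      (z₀ := (0:ℂ))
    filter_upwards [hB] with t ht
    rw [hbeq] at ht
    exact ht.unique (hV t)
  rw [Prod.mk.injEq]
  exact ⟨huU, hvV⟩
end

section
/- There exists a unique pair of complex sequences (c_j)_{j≥0}, (d_l)_{l≥0} with d_0 = 1 such that the Laurent series u(t) = Σ_{j=0}^∞ c_j t^{−(2j+1)} and v(t) = Σ_{l=0}^∞ d_l t^{−2l} converge absolutely for every t ∈ ℂ ∖ {0} and satisfy, for all t ≠ 0: u(qt) = (−1/(q² t²)) (q^α u(t) − t q^α v(t)) and v(qt) = (−1/(q² t²)) (t q² u(t) + (1 − t² q²) v(t)). Moreover c_0 ≠ 0. (This is the solution S_C = [u, v]^T at infinity of the q-difference system S_C(qt) = (−1/(q²t²)) [[q^α, −t q^α],[t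 q², 1 − t² q²]] S_C(t).) -/
/-- The defining property of the solution at infinity `S_C = [u, v]^T`:
`p = (c, d)` are the coefficient sequences of the Laurent series
`u(t) = Σ_j c_j t^{-(2j+1)}`, `v(t) = Σ_l d_l t^{-2l}` with `d_0 = 1`, the series
converge absolutely for every `t ≠ 0`, and they satisfy
`S_C(qt) = (-1/(q²t²)) [[q^α, -t q^α],[t q², 1 - t² q²]] S_C(t)`. -/
def SCProp (q α : ℝ) (p : (ℕ → ℂ) × (ℕ → ℂ)) : Prop :=
  p.2 0 = 1 ∧
  (∀ t : ℂ, t ≠ 0 →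
    Summable (fun j : ℕ => ‖p.1 j * t ^ (-(2 * (j : ℤ) + 1))‖) ∧
    Summable (fun l : ℕ => ‖p.2 l * t ^ (-(2 * (l : ℤ)))‖)) ∧
  (∀ t : ℂ, t ≠ 0 →
    (∑' j : ℕ, p.1 j * ((q : ℂ) * t) ^ (-(2 * (j : ℤ) + 1))) =
      (-1 / ((q : ℂ) ^ 2 * t ^ 2)) *
        (((q ^ α : ℝ) : ℂ) * (∑' j : ℕ, p.1 j * t ^ (-(2 * (j : ℤ) + 1))) -
          t * ((q ^ α : ℝ) : ℂ) * (∑' l : ℕ, p.2 l * t ^ (-(2 * (l : ℤ))))) ∧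
    (∑' l : ℕ, p.2 l * ((q : ℂ) * t) ^ (-(2 * (l : ℤ)))) =
      (-1 / ((q : ℂ) ^ 2 * t ^ 2)) *
        (t * (q : ℂ) ^ 2 * (∑' j : ℕ, p.1 j * t ^ (-(2 * (j : ℤ) + 1))) +
          (1 - t ^ 2 * (q : ℂ) ^ 2) * (∑' l : ℕ, p.2 l * t ^ (-(2 * (l : ℤ))))))

/- ======================  auxiliary material  ====================== -/

open Filter

noncomputable section
/-- shifted sequence: `shiftC c 0 = 0`, `shiftC c (n+1) = c n`. -/
def shiftC (c : ℕ → ℂ) : ℕ → ℂ := fun n => match n with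
  | 0 => 0
  | Nat.succ m => c m

/-- coefficient of `s^(2j+1)` in the first difference. -/
def eC (q α : ℝ) (c d : ℕ → ℂ) (j : ℕ) : ℂ :=
  c j * ((q:ℂ)⁻¹)^(2*j+1) + ((q^α : ℝ):ℂ) * ((q:ℂ)⁻¹)^2 * shiftC c j
    - ((q^α : ℝ):ℂ) * ((q:ℂ)⁻¹)^2 * d j

/-- coefficient of `s^(2l)` in the second difference. -/
def fC (q : ℝ) (c d : ℕ → ℂ) (l : ℕ) : ℂ :=
  d l * ((q:ℂ)⁻¹)^(2*l) + shiftC c l + ((q:ℂ)⁻¹)^2 * shiftC d l - d l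

/-- the recursively defined coefficient pair `(c_n, d_n)`. -/
def scSeq (q α : ℝ) : ℕ → ℂ × ℂ
  | 0 => (((q ^ α : ℝ) : ℂ) / (q:ℂ), 1)
  | n+1 =>
    (((q ^ α : ℝ) : ℂ) * (q:ℂ)^(2*n+1) *
        (-((q:ℂ)^(2*n) * ((q:ℂ)^2 * (scSeq q α n).1 + (scSeq q α n).2)) / (1 - (q:ℂ)^(2*n+2))
          - (scSeq q α n).1),
      -((q:ℂ)^(2*n) * ((q:ℂ)^2 * (scSeq q α n).1 + (scSeq q α n).2)) / (1 - (q:ℂ)^(2*n+2)))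
end

@[simp] lemma shiftC_zero (c : ℕ → ℂ) : shiftC c 0 = 0 := rfl
@[simp] lemma shiftC_succ (c : ℕ → ℂ) (n : ℕ) : shiftC c (n+1) = c n := rfl

lemma psZero (a : ℕ → ℂ)
    (hs : ∀ s : ℂ, s ≠ 0 → Summable (fun n => ‖a n * s ^ n‖))
    (h0 : ∀ s : ℂ, s ≠ 0 → ∑' n, a n * s ^ n = 0) : ∀ n, a n = 0 := by
  set p : FormalMultilinearSeries ℂ ℂ ℂ :=
    fun n => a n • ContinuousMultilinearMap.mkPiAlgebraFin ℂ n ℂ with hp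
  have hpn : ∀ n, ‖p n‖ = ‖a n‖ := by
    intro n
    show ‖a n • ContinuousMultilinearMap.mkPiAlgebraFin ℂ n ℂ‖ = _
    rw [norm_smul (a n) (ContinuousMultilinearMap.mkPiAlgebraFin ℂ n ℂ), ContinuousMultilinearMap.norm_mkPiAlgebraFin, mul_one]
  have happ : ∀ (n : ℕ) (x : ℂ), (p n fun _ => x) = a n * x ^ n := by
    intro n x
    simp [hp, ContinuousMultilinearMap.mkPiAlgebraFin_apply, List.prod_ofFn]
  have hrad : p.radius = ⊤ := by
    apply p.radius_eq_top_of_summable_norm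
    intro r
    have hr1 : (0:ℝ) < (r:ℝ) + 1 := by positivity
    have h1 : (((r:ℝ) + 1 : ℝ) : ℂ) ≠ 0 := by
      exact_mod_cast ne_of_gt hr1
    have := hs _ h1
    apply Summable.of_nonneg_of_le (fun n => by positivity) _ this
    intro n
    rw [hpn, norm_mul, norm_pow]
    gcongr
    rw [Complex.norm_real, Real.norm_eq_abs, abs_of_pos hr1]
    simp
  have hball := p.hasFPowerSeriesOnBall (by rw [hrad]; exact ENNReal.zero_lt_top)
  have hsumeq : ∀ x : ℂ, p.sum x = ∑' n, a n * x ^ n := by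
    intro x
    unfold FormalMultilinearSeries.sum
    exact tsum_congr fun n => happ n x
  have hcont : Continuous p.sum := by
    rw [← continuousOn_univ]
    have h2 := p.continuousOn (𝕜 := ℂ)
    rw [hrad] at h2
    have : Metric.eball (0:ℂ) ⊤ = Set.univ := by
      ext x; simp [Metric.mem_eball, edist_lt_top]
    rwa [this] at h2
  have hzero : p.sum = 0 := by
    apply Continuous.ext_on (dense_compl_singleton (0:ℂ)) hcont continuous_const
    intro x hx
    simp only [Set.mem_compl_iff, Set.mem_singleton_iff] at hx
    rw [hsumeq x, h0 x hx]
    rfl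
  have hat : HasFPowerSeriesAt p.sum p 0 := hball.hasFPowerSeriesAt
  rw [hzero] at hat
  have := hat.eq_zero
  intro n
  have h3 := happ n 1
  rw [this] at h3
  simpa using h3.symm

lemma evenZero (a : ℕ → ℂ)
    (hs : ∀ s : ℂ, s ≠ 0 → Summable (fun n => ‖a n * s ^ (2*n)‖))
    (h0 : ∀ s : ℂ, s ≠ 0 → ∑' n, a n * s ^ (2*n) = 0) : ∀ n, a n = 0 := by
  apply psZero
  · intro w hw
    obtain ⟨s, hsq⟩ := Complex.isAlgClosed.exists_pow_nat_eq w two_pos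
    have hs0 : s ≠ 0 := by
      rintro rfl; simp at hsq; exact hw hsq.symm
    have := hs s hs0
    convert this using 2 with n
    rw [← hsq, ← pow_mul]
  · intro w hw
    obtain ⟨s, hsq⟩ := Complex.isAlgClosed.exists_pow_nat_eq w two_pos
    have hs0 : s ≠ 0 := by
      rintro rfl; simp at hsq; exact hw hsq.symm
    have := h0 s hs0
    rw [← this]
    congr 1; funext n; rw [← hsq, ← pow_mul]

lemma zpow_odd (x : ℂ) (j : ℕ) : x ^ (-(2 * (j:ℤ) + 1)) = (x⁻¹)^(2*j+1) := by
  rw [← zpow_natCast x⁻¹, inv_zpow, ← zpow_neg]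
  congr 1

lemma zpow_even (x : ℂ) (l : ℕ) : x ^ (-(2 * (l:ℤ))) = (x⁻¹)^(2*l) := by
  rw [← zpow_natCast x⁻¹, inv_zpow, ← zpow_neg]
  congr 1

-- shifted odd series
lemma shift_odd_summable (c : ℕ → ℂ) (s : ℂ)
    (h : Summable fun j => c j * s^(2*j+1)) :
    Summable (fun j => shiftC c j * s^(2*j+1)) := by
  rw [← summable_nat_add_iff 1]
  have : Summable fun j => s^2 * (c j * s^(2*j+1)) := h.mul_left _
  apply this.congr
  intro j
  show s ^ 2 * _ = shiftC c (j+1) * s ^ (2*(j+1)+1)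
  simp only [shiftC]
  ring

lemma shift_odd_tsum (c : ℕ → ℂ) (s : ℂ)
    (h : Summable fun j => c j * s^(2*j+1)) :
    (∑' j, shiftC c j * s^(2*j+1)) = s^2 * ∑' j, c j * s^(2*j+1) := by
  rw [Summable.tsum_eq_zero_add (shift_odd_summable c s h), ← tsum_mul_left]
  simp only [shiftC]
  rw [zero_mul, zero_add]
  apply tsum_congr
  intro j
  ring

lemma shift_even_summable (d : ℕ → ℂ) (s : ℂ)
    (h : Summable fun l => d l * s^(2*l)) :
    Summable (fun l => shiftC d l * s^(2*l)) := by
  rw [← summable_nat_add_iff 1]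
  have : Summable fun l => s^2 * (d l * s^(2*l)) := h.mul_left _
  apply this.congr
  intro l
  show s ^ 2 * _ = shiftC d (l+1) * s ^ (2*(l+1))
  simp only [shiftC]
  ring

lemma shift_even_tsum (d : ℕ → ℂ) (s : ℂ)
    (h : Summable fun l => d l * s^(2*l)) :
    (∑' l, shiftC d l * s^(2*l)) = s^2 * ∑' l, d l * s^(2*l) := by
  rw [Summable.tsum_eq_zero_add (shift_even_summable d s h), ← tsum_mul_left]
  simp only [shiftC]
  rw [zero_mul, zero_add]
  apply tsum_congr
  intro l
  ring


lemma shift_oddeven_summable (c : ℕ → ℂ) (s : ℂ)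
    (h : Summable fun j => c j * s^(2*j+1)) :
    Summable (fun l => shiftC c l * s^(2*l)) := by
  rw [← summable_nat_add_iff 1]
  have : Summable fun j => s * (c j * s^(2*j+1)) := h.mul_left _
  apply this.congr
  intro j
  show s * _ = shiftC c (j+1) * s ^ (2*(j+1))
  simp only [shiftC]
  ring

lemma shift_oddeven_tsum (c : ℕ → ℂ) (s : ℂ)
    (h : Summable fun j => c j * s^(2*j+1)) :
    (∑' l, shiftC c l * s^(2*l)) = s * ∑' j, c j * s^(2*j+1) := by
  rw [Summable.tsum_eq_zero_add (shift_oddeven_summable c s h), ← tsum_mul_left]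
  simp only [shiftC]
  rw [zero_mul, zero_add]
  apply tsum_congr
  intro j
  ring

lemma diff1 (q α : ℝ) (c d : ℕ → ℂ) (hq : (q:ℂ) ≠ 0) (t : ℂ) (ht : t ≠ 0)
    (hc : Summable fun j => c j * (t⁻¹)^(2*j+1))
    (hcq : Summable fun j => c j * (((q:ℂ)*t)⁻¹)^(2*j+1))
    (hd : Summable fun l => d l * (t⁻¹)^(2*l)) :
    (∑' j, c j * ((q:ℂ)*t) ^ (-(2 * (j : ℤ) + 1))) -
      (-1 / ((q:ℂ)^2 * t^2)) *
        (((q^α : ℝ):ℂ) * (∑' j, c j * t ^ (-(2 * (j : ℤ) + 1))) -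
          t * ((q^α : ℝ):ℂ) * (∑' l, d l * t ^ (-(2 * (l : ℤ))))) =
    t⁻¹ * ∑' j, eC q α c d j * (t⁻¹)^(2*j) := by
  have hs : t⁻¹ ≠ 0 := inv_ne_zero ht
  simp only [zpow_odd, zpow_even, mul_inv]
  set s := t⁻¹ with hsdef
  set A := ((q^α : ℝ):ℂ) with hAdef
  set Q := (q:ℂ) with hQdef
  have S1 : Summable (fun j => (c j * (Q⁻¹*s)^(2*j+1))) := by
    apply hcq.congr
    intro j
    rw [mul_inv]
  have S2 : Summable (fun j => (A * Q⁻¹^2) * (shiftC c j * s^(2*j+1))) :=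
    (shift_odd_summable c s hc).mul_left _
  have S3 : Summable (fun j => (A * Q⁻¹^2 * s) * (d j * s^(2*j))) := hd.mul_left _
  have key : s * ∑' j, eC q α c d j * s^(2*j)
      = (∑' j, c j * (Q⁻¹*s)^(2*j+1))
        + (A * Q⁻¹^2) * (s^2 * ∑' j, c j * s^(2*j+1))
        - (A * Q⁻¹^2 * s) * (∑' l, d l * s^(2*l)) := by
    rw [← tsum_mul_left]
    have hterm : ∀ j, s * (eC q α c d j * s^(2*j)) =
        (c j * (Q⁻¹*s)^(2*j+1)) + (A * Q⁻¹^2) * (shiftC c j * s^(2*j+1))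
          - (A * Q⁻¹^2 * s) * (d j * s^(2*j)) := by
      intro j
      simp only [eC, ← hAdef, ← hQdef]
      ring
    rw [tsum_congr hterm, Summable.tsum_sub (S1.add S2) S3, Summable.tsum_add S1 S2,
      tsum_mul_left, tsum_mul_left, shift_odd_tsum c s hc]
  rw [key]
  have h2 : (Q^2 * t^2) ≠ 0 := by
    apply mul_ne_zero (pow_ne_zero _ hq) (pow_ne_zero _ ht)
  generalize (∑' j, c j * (Q⁻¹*s)^(2*j+1)) = X
  generalize (∑' j, c j * s^(2*j+1)) = Y
  generalize (∑' l, d l * s^(2*l)) = Z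
  rw [hsdef]
  field_simp
  ring

lemma diff2 (q α : ℝ) (c d : ℕ → ℂ) (hq : (q:ℂ) ≠ 0) (t : ℂ) (ht : t ≠ 0)
    (hc : Summable fun j => c j * (t⁻¹)^(2*j+1))
    (hdq : Summable fun l => d l * (((q:ℂ)*t)⁻¹)^(2*l))
    (hd : Summable fun l => d l * (t⁻¹)^(2*l)) :
    (∑' l, d l * ((q:ℂ)*t) ^ (-(2 * (l : ℤ)))) -
      (-1 / ((q:ℂ)^2 * t^2)) *
        (t * (q:ℂ)^2 * (∑' j, c j * t ^ (-(2 * (j : ℤ) + 1))) +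
          (1 - t^2 * (q:ℂ)^2) * (∑' l, d l * t ^ (-(2 * (l : ℤ))))) =
    ∑' l, fC q c d l * (t⁻¹)^(2*l) := by
  have hs : t⁻¹ ≠ 0 := inv_ne_zero ht
  simp only [zpow_odd, zpow_even, mul_inv]
  set s := t⁻¹ with hsdef
  set Q := (q:ℂ) with hQdef
  have S1 : Summable (fun l => (d l * (Q⁻¹*s)^(2*l))) := by
    apply hdq.congr
    intro l
    rw [mul_inv]
  have S2 : Summable (fun l => shiftC c l * s^(2*l)) :=
    shift_oddeven_summable c s hc
  have S3 : Summable (fun l => Q⁻¹^2 * (shiftC d l * s^(2*l))) :=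
    (shift_even_summable d s hd).mul_left _
  have S4 : Summable (fun l => d l * s^(2*l)) := hd
  have key : ∑' l, fC q c d l * s^(2*l)
      = (∑' l, d l * (Q⁻¹*s)^(2*l))
        + s * (∑' j, c j * s^(2*j+1))
        + Q⁻¹^2 * (s^2 * ∑' l, d l * s^(2*l))
        - (∑' l, d l * s^(2*l)) := by
    have hterm : ∀ l, fC q c d l * s^(2*l) =
        (d l * (Q⁻¹*s)^(2*l)) + shiftC c l * s^(2*l)
          + Q⁻¹^2 * (shiftC d l * s^(2*l)) - d l * s^(2*l) := by
      intro l
      simp only [fC, ← hQdef]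
      ring
    rw [tsum_congr hterm, Summable.tsum_sub ((S1.add S2).add S3) S4, Summable.tsum_add (S1.add S2) S3,
      Summable.tsum_add S1 S2, tsum_mul_left, shift_even_tsum d s hd,
      shift_oddeven_tsum c s hc]
  rw [key]
  generalize (∑' l, d l * (Q⁻¹*s)^(2*l)) = X
  generalize (∑' j, c j * s^(2*j+1)) = Y
  generalize (∑' l, d l * s^(2*l)) = Z
  rw [hsdef]
  field_simp
  ring

section
variable {q α : ℝ} (hq0 : 0 < q) (hq1 : q < 1)

lemma one_sub_q_pow_ne (hq0 : 0 < q) (hq1 : q < 1) (m : ℕ) (hm : 0 < m) :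
    (1 - (q:ℂ)^m) ≠ 0 := by
  have h1 : q ^ m < 1 := pow_lt_one₀ hq0.le hq1 hm.ne'
  have : ((1 - q^m : ℝ) : ℂ) ≠ 0 := by
    exact_mod_cast ne_of_gt (by linarith : (0:ℝ) < 1 - q^m)
  simpa using this

lemma eC_scSeq (hq0 : 0 < q) (hq1 : q < 1) (j : ℕ) :
    eC q α (fun n => (scSeq q α n).1) (fun n => (scSeq q α n).2) j = 0 := by
  have hq : (q:ℂ) ≠ 0 := by exact_mod_cast hq0.ne'
  cases j with
  | zero =>
    show (scSeq q α 0).1 * ((q:ℂ)⁻¹)^1 + _ * shiftC _ 0 - _ * (scSeq q α 0).2 = 0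
    simp only [scSeq, shiftC, inv_pow]
    field_simp
    ring
  | succ n =>
    have hne := one_sub_q_pow_ne hq0 hq1 (2*n+2) (by omega)
    show (scSeq q α (n+1)).1 * ((q:ℂ)⁻¹)^(2*(n+1)+1) + _ * shiftC _ (n+1)
        - _ * (scSeq q α (n+1)).2 = 0
    simp only [scSeq, shiftC, inv_pow]
    field_simp
    ring

lemma fC_scSeq (hq0 : 0 < q) (hq1 : q < 1) (l : ℕ) :
    fC q (fun n => (scSeq q α n).1) (fun n => (scSeq q α n).2) l = 0 := by
  have hq : (q:ℂ) ≠ 0 := by exact_mod_cast hq0.ne'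
  cases l with
  | zero =>
    show (scSeq q α 0).2 * ((q:ℂ)⁻¹)^0 + shiftC _ 0 + _ * shiftC _ 0 - (scSeq q α 0).2 = 0
    simp [shiftC]
  | succ n =>
    have hne := one_sub_q_pow_ne hq0 hq1 (2*n+2) (by omega)
    show (scSeq q α (n+1)).2 * ((q:ℂ)⁻¹)^(2*(n+1)) + shiftC _ (n+1)
        + _ * shiftC _ (n+1) - (scSeq q α (n+1)).2 = 0
    simp only [scSeq, shiftC, inv_pow]
    field_simp
    ring
end

section
variable {q α : ℝ}

lemma step_bound (hq0 : 0 < q) (hq1 : q < 1) (n : ℕ) :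
    ‖(scSeq q α (n+1)).1‖ + ‖(scSeq q α (n+1)).2‖ ≤
      ((1+q^α)*(1/(1-q^2)+1)) * q^(2*n) *
        (‖(scSeq q α n).1‖ + ‖(scSeq q α n).2‖) := by
  have hq2 : (0:ℝ) < 1 - q^2 := by nlinarith
  have hQn : ∀ m:ℕ, ‖(q:ℂ)^m‖ = q^m := by
    intro m
    rw [norm_pow, Complex.norm_real, Real.norm_eq_abs, abs_of_pos hq0]
  have hA : ‖((q^α:ℝ):ℂ)‖ = q^α := by
    rw [Complex.norm_real, Real.norm_eq_abs, abs_of_pos (Real.rpow_pos_of_pos hq0 α)]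
  have hApos : (0:ℝ) < q^α := Real.rpow_pos_of_pos hq0 α
  set cn := (scSeq q α n).1
  set dn := (scSeq q α n).2
  set S := ‖cn‖ + ‖dn‖ with hS
  have hSnn : 0 ≤ S := by positivity
  have hqn1 : q^(2*n) ≤ 1 := pow_le_one₀ hq0.le hq1.le
  have hnorm1 : ‖1 - (q:ℂ)^(2*n+2)‖ = 1 - q^(2*n+2) := by
    have h1 : (1 - (q:ℂ)^(2*n+2)) = ((1 - q^(2*n+2) : ℝ):ℂ) := by push_cast; ring
    have h2 : q^(2*n+2) < 1 := pow_lt_one₀ hq0.le hq1 (by omega)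
    rw [h1, Complex.norm_real, Real.norm_eq_abs, abs_of_pos (by linarith)]
  have hden : 1 - q^2 ≤ 1 - q^(2*n+2) := by
    have : q^(2*n+2) ≤ q^2 := pow_le_pow_of_le_one hq0.le hq1.le (by omega)
    linarith
  have hnum : ‖(q:ℂ)^2 * cn + dn‖ ≤ S := by
    calc ‖(q:ℂ)^2 * cn + dn‖ ≤ ‖(q:ℂ)^2 * cn‖ + ‖dn‖ := norm_add_le _ _
    _ = q^2*‖cn‖+‖dn‖ := by rw [norm_mul, hQn]
    _ ≤ S := by nlinarith [norm_nonneg cn]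
  have hd' : ‖(scSeq q α (n+1)).2‖ ≤ q^(2*n) * (S / (1-q^2)) := by
    show ‖-((q:ℂ)^(2*n) * ((q:ℂ)^2 * cn + dn)) / (1 - (q:ℂ)^(2*n+2))‖ ≤ _
    rw [norm_div, norm_neg, norm_mul, hQn, hnorm1, ← mul_div_assoc]
    apply div_le_div₀ (by positivity) _ (by linarith) hden
    exact mul_le_mul_of_nonneg_left hnum (by positivity)
  have hc' : ‖(scSeq q α (n+1)).1‖ ≤
      q^α * q^(2*n) * (S/(1-q^2) + S) := by
    show ‖((q^α:ℝ):ℂ) * (q:ℂ)^(2*n+1) * (_ - cn)‖ ≤ _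
    rw [norm_mul, norm_mul, hA, hQn]
    have h3 : ‖(scSeq q α (n+1)).2 - cn‖ ≤ S/(1-q^2) + S := by
      calc ‖(scSeq q α (n+1)).2 - cn‖ ≤ ‖(scSeq q α (n+1)).2‖ + ‖cn‖ := norm_sub_le _ _
      _ ≤ q^(2*n) * (S/(1-q^2)) + S := by
          have : ‖cn‖ ≤ S := by rw [hS]; nlinarith [norm_nonneg dn]
          linarith [hd']
      _ ≤ S/(1-q^2) + S := by nlinarith [div_nonneg hSnn hq2.le]
    calc q^α * q^(2*n+1) * ‖(scSeq q α (n+1)).2 - cn‖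
        ≤ q^α * q^(2*n+1) * (S/(1-q^2) + S) := by
          apply mul_le_mul_of_nonneg_left h3 (by positivity)
      _ ≤ q^α * q^(2*n) * (S/(1-q^2) + S) := by
          have h4 : q^(2*n+1) ≤ q^(2*n) := pow_le_pow_of_le_one hq0.le hq1.le (by omega)
          have h5 : 0 ≤ S/(1-q^2) + S := by positivity
          exact mul_le_mul_of_nonneg_right (mul_le_mul_of_nonneg_left h4 hApos.le) h5
  have hfinal : q^α * q^(2*n) * (S/(1-q^2) + S) + q^(2*n) * (S / (1-q^2)) ≤
      ((1+q^α)*(1/(1-q^2)+1)) * q^(2*n) * S := by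
    have h6 : 0 ≤ q^(2*n) := by positivity
    have h8 : (0:ℝ) ≤ (1-q^2)⁻¹ := by positivity
    rw [div_eq_mul_inv, one_div]
    nlinarith [mul_nonneg h6 hSnn, mul_nonneg (mul_nonneg h6 hSnn) h8]
  linarith [hc', hd']

lemma master_summable (hq0 : 0 < q) (hq1 : q < 1) (r : ℝ) (hr : 0 ≤ r) :
    Summable (fun n => (‖(scSeq q α n).1‖ + ‖(scSeq q α n).2‖) * r^n) := by
  have hq2 : (0:ℝ) < 1 - q^2 := by nlinarith
  have hApos : (0:ℝ) < q^α := Real.rpow_pos_of_pos hq0 α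
  set K := (1+q^α)*(1/(1-q^2)+1) with hK
  have hKpos : 0 < K := by positivity
  apply summable_of_ratio_norm_eventually_le (r := 1/2) (by norm_num)
  have hq2lt : q^2 < 1 := by nlinarith
  have h0 : Tendsto (fun n : ℕ => (q^2)^n) atTop (nhds 0) :=
    tendsto_pow_atTop_nhds_zero_of_lt_one (by positivity) hq2lt
  have hε : (0:ℝ) < 1/(2*(K*r+1)) := by positivity
  have hev : ∀ᶠ n in atTop, (q^2)^n < 1/(2*(K*r+1)) := h0.eventually (gt_mem_nhds hε)
  filter_upwards [hev] with n hn
  set S := fun m => ‖(scSeq q α m).1‖ + ‖(scSeq q α m).2‖ with hSdef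
  have hSnn : ∀ m, 0 ≤ S m := fun m => by positivity
  rw [Real.norm_eq_abs, Real.norm_eq_abs, abs_of_nonneg (by positivity),
    abs_of_nonneg (by positivity)]
  have h1 : K * r * (q^2)^n ≤ 1/2 := by
    have h2 : (0:ℝ) < K*r+1 := by positivity
    have h3 : K * r * (q^2)^n ≤ K*r * (1/(2*(K*r+1))) := by
      apply mul_le_mul_of_nonneg_left hn.le (by positivity)
    have h4 : K*r * (1/(2*(K*r+1))) ≤ 1/2 := by
      rw [mul_one_div, div_le_div_iff₀ (by positivity) (by norm_num)]
      nlinarith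
    linarith
  calc S (n+1) * r^(n+1) ≤ (K * q^(2*n) * S n) * r^(n+1) := by
        apply mul_le_mul_of_nonneg_right (step_bound hq0 hq1 n) (by positivity)
    _ = (K*r*(q^2)^n) * (S n * r^n) := by rw [pow_succ, ← pow_mul]; ring
    _ ≤ 1/2 * (S n * r^n) := by
        apply mul_le_mul_of_nonneg_right h1 (by positivity)
end

lemma shiftnorm_oddeven (c : ℕ → ℂ) (s : ℂ)
    (h : Summable fun j => ‖c j * s^(2*j+1)‖) :
    Summable fun l => ‖shiftC c l * s^(2*l)‖ := by
  rw [← summable_nat_add_iff 1]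
  apply (h.mul_right ‖s‖).congr
  intro j
  rw [← norm_mul]
  congr 1
  rw [shiftC_succ]
  ring

lemma shiftnorm_even (d : ℕ → ℂ) (s : ℂ)
    (h : Summable fun l => ‖d l * s^(2*l)‖) :
    Summable fun l => ‖shiftC d l * s^(2*l)‖ := by
  rw [← summable_nat_add_iff 1]
  apply (h.mul_right (‖s‖^2)).congr
  intro j
  rw [← norm_pow, ← norm_mul]
  congr 1
  rw [shiftC_succ]
  ring

lemma e_norm_summable (q α : ℝ) (c d : ℕ → ℂ) (hq : (q:ℂ) ≠ 0)
    (H : ∀ s : ℂ, s ≠ 0 → Summable (fun j => ‖c j * s^(2*j+1)‖) ∧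
      Summable (fun l => ‖d l * s^(2*l)‖))
    (s : ℂ) (hs : s ≠ 0) :
    Summable fun j => ‖eC q α c d j * s^(2*j)‖ := by
  obtain ⟨hc, hd⟩ := H s hs
  obtain ⟨hcq, -⟩ := H ((q:ℂ)⁻¹ * s) (mul_ne_zero (inv_ne_zero hq) hs)
  have g2 := shiftnorm_oddeven c s hc
  set A := ((q^α : ℝ):ℂ)
  apply Summable.of_nonneg_of_le (fun j => norm_nonneg _)
    (f := fun j => ‖c j * ((q:ℂ)⁻¹*s)^(2*j+1)‖ * ‖s‖⁻¹
      + ‖A*((q:ℂ)⁻¹)^2‖ * ‖shiftC c j * s^(2*j)‖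
      + ‖A*((q:ℂ)⁻¹)^2‖ * ‖d j * s^(2*j)‖)
  · intro j
    have hss : s^(2*j+1) * s⁻¹ = s^(2*j) := by
      rw [pow_succ, mul_assoc, mul_inv_cancel₀ hs, mul_one]
    have hX : eC q α c d j * s^(2*j) =
        (c j * ((q:ℂ)⁻¹*s)^(2*j+1)) * s⁻¹
        + (A*((q:ℂ)⁻¹)^2) * (shiftC c j * s^(2*j))
        - (A*((q:ℂ)⁻¹)^2) * (d j * s^(2*j)) := by
      simp only [eC, mul_pow]
      linear_combination (-(c j * ((q:ℂ)⁻¹)^(2*j+1))) * hss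
    rw [hX]
    have h1 : ‖c j * ((q:ℂ)⁻¹*s)^(2*j+1) * s⁻¹‖ =
        ‖c j * ((q:ℂ)⁻¹*s)^(2*j+1)‖ * ‖s‖⁻¹ := by
      rw [norm_mul, norm_inv]
    have h2 : ‖(A*((q:ℂ)⁻¹)^2) * (shiftC c j * s^(2*j))‖ =
        ‖A*((q:ℂ)⁻¹)^2‖ * ‖shiftC c j * s^(2*j)‖ := norm_mul _ _
    have h3 : ‖(A*((q:ℂ)⁻¹)^2) * (d j * s^(2*j))‖ =
        ‖A*((q:ℂ)⁻¹)^2‖ * ‖d j * s^(2*j)‖ := norm_mul _ _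
    refine (norm_sub_le _ _).trans ?_
    rw [h3]
    refine add_le_add ((norm_add_le _ _).trans ?_) le_rfl
    rw [h1, h2]
  · exact ((hcq.mul_right _).add (g2.mul_left _)).add (hd.mul_left _)

lemma f_norm_summable (q : ℝ) (c d : ℕ → ℂ) (hq : (q:ℂ) ≠ 0)
    (H : ∀ s : ℂ, s ≠ 0 → Summable (fun j => ‖c j * s^(2*j+1)‖) ∧
      Summable (fun l => ‖d l * s^(2*l)‖))
    (s : ℂ) (hs : s ≠ 0) :
    Summable fun l => ‖fC q c d l * s^(2*l)‖ := by
  obtain ⟨hc, hd⟩ := H s hs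
  obtain ⟨-, hdq⟩ := H ((q:ℂ)⁻¹ * s) (mul_ne_zero (inv_ne_zero hq) hs)
  have g2 := shiftnorm_oddeven c s hc
  have g3 := shiftnorm_even d s hd
  apply Summable.of_nonneg_of_le (fun l => norm_nonneg _)
    (f := fun l => ‖d l * ((q:ℂ)⁻¹*s)^(2*l)‖
      + ‖shiftC c l * s^(2*l)‖
      + ‖((q:ℂ)⁻¹)^2‖ * ‖shiftC d l * s^(2*l)‖
      + ‖d l * s^(2*l)‖)
  · intro l
    have hX : fC q c d l * s^(2*l) =
        (d l * ((q:ℂ)⁻¹*s)^(2*l))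
        + shiftC c l * s^(2*l)
        + ((q:ℂ)⁻¹)^2 * (shiftC d l * s^(2*l))
        - d l * s^(2*l) := by
      simp only [fC]
      rw [mul_pow]
      ring
    rw [hX]
    refine (norm_sub_le _ _).trans ?_
    refine add_le_add ((norm_add_le _ _).trans (add_le_add (norm_add_le _ _) ?_)) le_rfl
    rw [norm_mul]
  · exact (((hdq.add g2).add (g3.mul_left _)).add hd)

section
variable {q α : ℝ}

lemma coeff_unique (hq0 : 0 < q) (hq1 : q < 1) (x y x' y' : ℕ → ℂ)
    (h0 : y 0 = y' 0)
    (he : ∀ j, eC q α x y j = 0) (hf : ∀ l, fC q x y l = 0)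
    (he' : ∀ j, eC q α x' y' j = 0) (hf' : ∀ l, fC q x' y' l = 0) :
    ∀ n, x n = x' n ∧ y n = y' n := by
  have hq : (q:ℂ) ≠ 0 := by exact_mod_cast hq0.ne'
  have hk' : ∀ m:ℕ, ((q:ℂ)⁻¹)^m ≠ 0 := fun m => pow_ne_zero _ (inv_ne_zero hq)
  have hk : ∀ n:ℕ, ((q:ℂ)⁻¹)^(2*(n+1)) - 1 ≠ 0 := by
    intro n
    have h1 : (1:ℝ) < (q⁻¹)^(2*(n+1)) := by
      apply one_lt_pow₀ _ (by omega)
      rw [lt_inv_comm₀] <;> simp [hq0, hq1]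
    have h2 : ((q:ℂ)⁻¹)^(2*(n+1)) - 1 = (((q⁻¹)^(2*(n+1)) - 1 : ℝ) : ℂ) := by
      push_cast; ring
    rw [h2]
    exact_mod_cast ne_of_gt (by linarith : (0:ℝ) < (q⁻¹)^(2*(n+1)) - 1)
  intro n
  induction n with
  | zero =>
    refine ⟨?_, h0⟩
    have h1 := he 0
    have h2 := he' 0
    simp only [eC, shiftC_zero] at h1 h2
    rw [h0] at h1
    apply mul_right_cancel₀ (hk' 1)
    linear_combination h1 - h2
  | succ n ih =>
    have hy : y (n+1) = y' (n+1) := by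
      have h1 := hf (n+1)
      have h2 := hf' (n+1)
      simp only [fC, shiftC_succ] at h1 h2
      rw [ih.1, ih.2] at h1
      apply mul_right_cancel₀ (hk n)
      linear_combination h1 - h2
    have hx : x (n+1) = x' (n+1) := by
      have h1 := he (n+1)
      have h2 := he' (n+1)
      simp only [eC, shiftC_succ] at h1 h2
      rw [ih.1, hy] at h1
      apply mul_right_cancel₀ (hk' (2*(n+1)+1))
      linear_combination h1 - h2
    exact ⟨hx, hy⟩
end

lemma diffs (q α : ℝ) (hq : (q:ℂ) ≠ 0) (c d : ℕ → ℂ)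
    (Hs : ∀ s : ℂ, s ≠ 0 → Summable (fun j => ‖c j * s^(2*j+1)‖) ∧
      Summable (fun l => ‖d l * s^(2*l)‖)) (t : ℂ) (ht : t ≠ 0) :
    ((∑' j, c j * ((q:ℂ)*t) ^ (-(2 * (j : ℤ) + 1))) -
      (-1 / ((q:ℂ)^2 * t^2)) *
        (((q^α : ℝ):ℂ) * (∑' j, c j * t ^ (-(2 * (j : ℤ) + 1))) -
          t * ((q^α : ℝ):ℂ) * (∑' l, d l * t ^ (-(2 * (l : ℤ))))) =
      t⁻¹ * ∑' j, eC q α c d j * (t⁻¹)^(2*j)) ∧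
    ((∑' l, d l * ((q:ℂ)*t) ^ (-(2 * (l : ℤ)))) -
      (-1 / ((q:ℂ)^2 * t^2)) *
        (t * (q:ℂ)^2 * (∑' j, c j * t ^ (-(2 * (j : ℤ) + 1))) +
          (1 - t^2 * (q:ℂ)^2) * (∑' l, d l * t ^ (-(2 * (l : ℤ))))) =
      ∑' l, fC q c d l * (t⁻¹)^(2*l)) := by
  have hc : Summable fun j => c j * (t⁻¹)^(2*j+1) := (Hs t⁻¹ (inv_ne_zero ht)).1.of_norm
  have hd : Summable fun l => d l * (t⁻¹)^(2*l) := (Hs t⁻¹ (inv_ne_zero ht)).2.of_norm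
  have hqt : ((q:ℂ)*t)⁻¹ ≠ 0 := inv_ne_zero (mul_ne_zero hq ht)
  have hcq : Summable fun j => c j * (((q:ℂ)*t)⁻¹)^(2*j+1) := (Hs _ hqt).1.of_norm
  have hdq : Summable fun l => d l * (((q:ℂ)*t)⁻¹)^(2*l) := (Hs _ hqt).2.of_norm
  exact ⟨diff1 q α c d hq t ht hc hcq hd, diff2 q α c d hq t ht hc hdq hd⟩

/-- there is a unique pair of coefficient sequences `(c, d)` with
`d_0 = 1` defining the solution at infinity, and moreover `c_0 ≠ 0`. -/
theorem statement13 (q α : ℝ) (hq0 : 0 < q) (hq1 : q < 1) (hα : -1 < α) :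
    ∃ p : (ℕ → ℂ) × (ℕ → ℂ), SCProp q α p ∧ p.1 0 ≠ 0 ∧
      ∀ p' : (ℕ → ℂ) × (ℕ → ℂ), SCProp q α p' → p' = p := by
  have hq : (q:ℂ) ≠ 0 := by exact_mod_cast hq0.ne'
  set c : ℕ → ℂ := fun n => (scSeq q α n).1 with hcdef
  set d : ℕ → ℂ := fun n => (scSeq q α n).2 with hddef
  have Hs : ∀ s : ℂ, s ≠ 0 → Summable (fun j => ‖c j * s^(2*j+1)‖) ∧
      Summable (fun l => ‖d l * s^(2*l)‖) := by
    intro s hs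
    have hM := master_summable (α := α) hq0 hq1 (‖s‖^2) (by positivity)
    constructor
    · apply Summable.of_nonneg_of_le (fun j => norm_nonneg _) _ (hM.mul_left ‖s‖)
      intro j
      rw [norm_mul, norm_pow]
      calc ‖c j‖ * ‖s‖^(2*j+1) = (‖c j‖ * (‖s‖^2)^j) * ‖s‖ := by
            rw [pow_succ, ← pow_mul]
            ring
        _ ≤ ((‖c j‖ + ‖d j‖) * (‖s‖^2)^j) * ‖s‖ := by
            have h1 : ‖c j‖ ≤ ‖c j‖ + ‖d j‖ := le_add_of_nonneg_right (norm_nonneg _)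
            exact mul_le_mul_of_nonneg_right
              (mul_le_mul_of_nonneg_right h1 (by positivity)) (norm_nonneg s)
        _ = ‖s‖ * ((‖c j‖ + ‖d j‖) * (‖s‖^2)^j) := by ring
    · apply Summable.of_nonneg_of_le (fun l => norm_nonneg _) _ hM
      intro l
      rw [norm_mul, norm_pow, pow_mul]
      exact mul_le_mul_of_nonneg_right
        (le_add_of_nonneg_left (norm_nonneg _)) (by positivity)
  have Ht : ∀ t : ℂ, t ≠ 0 → Summable (fun j => ‖c j * t ^ (-(2*(j:ℤ)+1))‖) ∧
      Summable (fun l => ‖d l * t ^ (-(2*(l:ℤ)))‖) := by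
    intro t ht
    obtain ⟨h1, h2⟩ := Hs t⁻¹ (inv_ne_zero ht)
    constructor
    · apply h1.congr
      intro j
      rw [zpow_odd]
    · apply h2.congr
      intro l
      rw [zpow_even]
  refine ⟨(c, d), ⟨rfl, Ht, ?_⟩, ?_, ?_⟩
  · intro t ht
    obtain ⟨D1, D2⟩ := diffs q α hq c d Hs t ht
    have hE : (∑' j, eC q α c d j * (t⁻¹)^(2*j)) = (0:ℂ) := by
      have h : ∀ j:ℕ, eC q α c d j * (t⁻¹)^(2*j) = (0:ℂ) := by
        intro j
        rw [hcdef, hddef, eC_scSeq hq0 hq1 j, zero_mul]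
      rw [tsum_congr h, tsum_zero]
    have hF : (∑' l, fC q c d l * (t⁻¹)^(2*l)) = (0:ℂ) := by
      have h : ∀ l:ℕ, fC q c d l * (t⁻¹)^(2*l) = (0:ℂ) := by
        intro l
        rw [hcdef, hddef, fC_scSeq (α := α) hq0 hq1 l, zero_mul]
      rw [tsum_congr h, tsum_zero]
    constructor
    · rw [hE, mul_zero] at D1
      exact sub_eq_zero.mp D1
    · rw [hF] at D2
      exact sub_eq_zero.mp D2
  · show ((q ^ α : ℝ) : ℂ) / (q:ℂ) ≠ 0
    apply div_ne_zero _ hq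
    exact_mod_cast (Real.rpow_pos_of_pos hq0 α).ne'
  · rintro p' ⟨h0', hsum', heq'⟩
    have Hs' : ∀ s : ℂ, s ≠ 0 → Summable (fun j => ‖p'.1 j * s^(2*j+1)‖) ∧
        Summable (fun l => ‖p'.2 l * s^(2*l)‖) := by
      intro s hs
      obtain ⟨h1, h2⟩ := hsum' s⁻¹ (inv_ne_zero hs)
      constructor
      · apply h1.congr
        intro j
        rw [zpow_odd, inv_inv]
      · apply h2.congr
        intro l
        rw [zpow_even, inv_inv]
    have he' : ∀ j, eC q α p'.1 p'.2 j = 0 := by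
      apply evenZero
      · exact fun s hs => e_norm_summable q α p'.1 p'.2 hq Hs' s hs
      · intro s hs
        have ht : (s⁻¹ : ℂ) ≠ 0 := inv_ne_zero hs
        obtain ⟨D1, -⟩ := diffs q α hq p'.1 p'.2 Hs' s⁻¹ ht
        rw [inv_inv] at D1
        obtain ⟨E1, -⟩ := heq' s⁻¹ ht
        rw [E1, sub_self] at D1
        rcases mul_eq_zero.mp D1.symm with h | h
        · exact absurd h hs
        · exact h
    have hf' : ∀ l, fC q p'.1 p'.2 l = 0 := by
      apply evenZero
      · exact fun s hs => f_norm_summable q p'.1 p'.2 hq Hs' s hs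
      · intro s hs
        have ht : (s⁻¹ : ℂ) ≠ 0 := inv_ne_zero hs
        obtain ⟨-, D2⟩ := diffs q α hq p'.1 p'.2 Hs' s⁻¹ ht
        rw [inv_inv] at D2
        obtain ⟨-, E2⟩ := heq' s⁻¹ ht
        rw [E2, sub_self] at D2
        exact D2.symm
    have huniq := coeff_unique (α := α) hq0 hq1 p'.1 p'.2 c d
      (by rw [h0']; rfl) he' hf'
      (by rw [hcdef, hddef]; exact eC_scSeq hq0 hq1)
      (by rw [hcdef, hddef]; exact fC_scSeq (α := α) hq0 hq1)
    exact Prod.ext (funext fun n => (huniq n).1) (funext fun n => (huniq n).2)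
end

section
/- Let C be analytic on ℂ ∖ ({0} ∪ {q^k : k ∈ ℤ}) such that at each point q^k (k ∈ ℤ) C has at worst a simple pole (i.e. (z − q^k)·C(z) is bounded near q^k), and suppose C(qz) = C(z) for all z in its domain. Then C extends to an analytic function on ℂ ∖ {0} and is constant. In particular, there is no function on ℂ ∖ {0}, analytic except for genuine simple poles at every point q^k (k ∈ ℤ), that is invariant under z ↦ qz. -/
open Complex Metric Set Filter Function Topology

namespace St15

variable {q : ℝ}

lemma Qne (hq0 : 0 < q) : (q : ℂ) ≠ 0 := Complex.ofReal_ne_zero.2 hq0.ne'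

lemma normQ (hq0 : 0 < q) (k : ℤ) : ‖((q:ℂ))^k‖ = q ^ k := by
  rw [norm_zpow, Complex.norm_real, Real.norm_eq_abs, abs_of_pos hq0]

lemma finite_aux (hq0 : 0 < q) (hq1 : q < 1) (c d : ℝ) (hc : 0 < c) :
    {k : ℤ | c ≤ q ^ k ∧ q ^ k ≤ d}.Finite := by
  obtain ⟨N, hN⟩ := exists_pow_lt_of_lt_one hc hq1
  have hd : 0 < d → ∃ N' : ℕ, q ^ N' < 1/d := fun hd0 =>
    exists_pow_lt_of_lt_one (by positivity) hq1
  rcases le_or_gt d 0 with h | h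
  · convert Set.finite_empty
    ext k; simp only [mem_setOf_eq, mem_empty_iff_false, iff_false, not_and, not_le]
    intro hk; exact lt_of_le_of_lt h (by positivity)
  obtain ⟨N', hN'⟩ := hd h
  apply Set.Finite.subset (Set.finite_Icc (-(N' : ℤ)) (N : ℤ))
  rintro k ⟨h1, h2⟩
  constructor
  · by_contra hk
    push_neg at hk
    have h4 : q ^ (-(N' : ℤ)) ≤ q ^ k := (zpow_le_zpow_iff_right_of_lt_one₀ hq0 hq1).2 (by omega)
    have h6 : q ^ (-(N':ℤ)) = (q ^ N')⁻¹ := by rw [zpow_neg, zpow_natCast]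
    have h7 : (q ^ N')⁻¹ ≤ d := h6 ▸ h4.trans h2
    have h8 : 0 < q ^ N' := pow_pos hq0 N'
    have h9 : (q ^ N') * (q ^ N')⁻¹ = 1 := mul_inv_cancel₀ h8.ne'
    rw [lt_div_iff₀ h] at hN'
    nlinarith [mul_le_mul_of_nonneg_left h7 h8.le]
  · by_contra hk
    push_neg at hk
    have h4 : q ^ k ≤ q ^ (N : ℤ) := (zpow_le_zpow_iff_right_of_lt_one₀ hq0 hq1).2 (by omega)
    rw [zpow_natCast] at h4
    linarith [h1.trans h4]


lemma S_open (hq0 : 0 < q) (hq1 : q < 1) :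
    IsOpen {z : ℂ | z ≠ 0 ∧ ∀ k : ℤ, z ≠ (q:ℂ)^k} := by
  rw [Metric.isOpen_iff]
  rintro z ⟨hz0, hzk⟩
  set r := ‖z‖ with hr
  have hr0 : 0 < r := norm_pos_iff.2 hz0
  set F : Set ℂ := (fun k : ℤ => ((q:ℂ))^k) '' {k : ℤ | r/2 ≤ q^k ∧ q^k ≤ 2*r} with hF
  have hFfin : F.Finite := (finite_aux hq0 hq1 (r/2) (2*r) (by linarith)).image _
  have hzF : z ∈ Fᶜ := by
    rintro ⟨k, _, rfl⟩
    exact hzk k rfl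
  obtain ⟨ε, hε0, hε⟩ := Metric.isOpen_iff.1 hFfin.isClosed.isOpen_compl z hzF
  refine ⟨min ε (r/2), by positivity, ?_⟩
  rintro w hw
  rw [mem_ball, dist_eq_norm] at hw
  have hw1 : ‖w - z‖ < ε := hw.trans_le (min_le_left _ _)
  have hw2 : ‖w - z‖ < r/2 := hw.trans_le (min_le_right _ _)
  have hwn1 : r/2 < ‖w‖ := by
    have := norm_sub_norm_le w z
    have h2 := norm_sub_rev w z
    nlinarith [norm_sub_norm_le z w, norm_sub_rev z w ▸ hw2]
  have hwn2 : ‖w‖ ≤ 2*r := by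
    nlinarith [norm_sub_norm_le w z]
  constructor
  · exact fun h => by simp [h] at hwn1; linarith
  · intro k hk
    have : w ∈ F := ⟨k, ⟨by rw [← normQ hq0, ← hk]; exact hwn1.le, by rw [← normQ hq0, ← hk]; exact hwn2⟩, hk.symm⟩
    exact absurd (mem_ball.2 (dist_eq_norm w z ▸ hw1)) (fun hb => hε hb this)


lemma S_mul (hq0 : 0 < q) {z : ℂ} (hz : z ≠ 0 ∧ ∀ k : ℤ, z ≠ (q:ℂ)^k) (n : ℤ) :
    (q:ℂ)^n * z ≠ 0 ∧ ∀ k : ℤ, (q:ℂ)^n * z ≠ (q:ℂ)^k := by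
  have hQ := Qne hq0
  refine ⟨mul_ne_zero (zpow_ne_zero _ hQ) hz.1, fun k h => hz.2 (k - n) ?_⟩
  have h1 : (q:ℂ)^(-n) * ((q:ℂ)^n * z) = z := by
    rw [← mul_assoc, ← zpow_add₀ hQ, neg_add_cancel, zpow_zero, one_mul]
  rw [← h1, h, ← zpow_add₀ hQ]
  ring_nf

lemma Cinv (hq0 : 0 < q) (C : ℂ → ℂ)
    (hinv : ∀ z : ℂ, (z ≠ 0 ∧ ∀ k : ℤ, z ≠ (q : ℂ) ^ k) → C ((q : ℂ) * z) = C z)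
    {z : ℂ} (hz : z ≠ 0 ∧ ∀ k : ℤ, z ≠ (q:ℂ)^k) (n : ℤ) : C ((q:ℂ)^n * z) = C z := by
  have hQ := Qne hq0
  induction n using Int.induction_on with
  | zero => simp
  | succ n ih =>
    have h1 : (q:ℂ)^((n:ℤ)+1) * z = (q:ℂ) * ((q:ℂ)^(n:ℤ) * z) := by
      rw [zpow_add₀ hQ, zpow_one]; ring
    rw [h1, hinv _ (S_mul hq0 hz n), ih]
  | pred n ih =>
    have h1 : (q:ℂ)^(-(n:ℤ)) * z = (q:ℂ) * ((q:ℂ)^(-(n:ℤ)-1) * z) := by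
      rw [← mul_assoc, ← zpow_one_add₀ hQ]; ring_nf
    rw [← ih, h1, hinv _ (S_mul hq0 hz (-(n:ℤ)-1))]

lemma mem_S_of_near_one (hq0 : 0 < q) (hq1 : q < 1) {w : ℂ}
    (hw : ‖w - 1‖ < min (1-q) (1/q - 1)) (hw1 : w ≠ 1) :
    w ≠ 0 ∧ ∀ k : ℤ, w ≠ (q:ℂ)^k := by
  have hq1' : 1 < 1/q := by rw [lt_div_iff₀ hq0]; linarith
  have hε1 : min (1-q) (1/q-1) ≤ 1 - q := min_le_left _ _
  have hε2 : min (1-q) (1/q-1) ≤ 1/q - 1 := min_le_right _ _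
  constructor
  · intro h0
    rw [h0] at hw
    simp only [zero_sub, norm_neg, norm_one] at hw
    linarith
  · intro k hk
    rcases lt_trichotomy k 0 with h | h | h
    · have : q^(-1 : ℤ) ≤ q^k := (zpow_le_zpow_iff_right_of_lt_one₀ hq0 hq1).2 (by omega)
      rw [zpow_neg_one] at this
      have hn : ‖w - 1‖ = |q^k - 1| := by
        rw [hk, ← Complex.ofReal_zpow, ← Complex.ofReal_one, ← Complex.ofReal_sub,
          Complex.norm_real, Real.norm_eq_abs]
      rw [one_div] at hq1' hε2 hw
      have hpos : (0:ℝ) ≤ q^k - 1 := by nlinarith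
      rw [hn, _root_.abs_of_nonneg hpos] at hw
      linarith
    · exact hw1 (by rw [hk, h, zpow_zero])
    · have : q^k ≤ q^(1 : ℤ) := (zpow_le_zpow_iff_right_of_lt_one₀ hq0 hq1).2 (by omega)
      rw [zpow_one] at this
      have hn : ‖w - 1‖ = |q^k - 1| := by
        rw [hk, ← Complex.ofReal_zpow, ← Complex.ofReal_one, ← Complex.ofReal_sub,
          Complex.norm_real, Real.norm_eq_abs]
      rw [hn, abs_of_nonpos (by linarith)] at hw
      linarith

end St15

set_option maxHeartbeats 2000000 in
/-- a function analytic on `ℂ ∖ ({0} ∪ {q^k : k ∈ ℤ})` with at worst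
simple poles at the points `q^k` and invariant under `z ↦ qz` is constant (its
analytic extension to `ℂ ∖ {0}` is a constant). -/
theorem statement15 (q : ℝ) (hq0 : 0 < q) (hq1 : q < 1) (C : ℂ → ℂ)
    (hC : AnalyticOn ℂ C {z : ℂ | z ≠ 0 ∧ ∀ k : ℤ, z ≠ (q : ℂ) ^ k})
    (hpole : ∀ k : ℤ, ∃ M ε : ℝ, 0 < ε ∧ ∀ z : ℂ,
      (z ≠ 0 ∧ ∀ j : ℤ, z ≠ (q : ℂ) ^ j) → ‖z - (q : ℂ) ^ k‖ < ε →
        ‖(z - (q : ℂ) ^ k) * C z‖ ≤ M)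
    (hinv : ∀ z : ℂ, (z ≠ 0 ∧ ∀ k : ℤ, z ≠ (q : ℂ) ^ k) → C ((q : ℂ) * z) = C z) :
    ∃ c₀ : ℂ, ∀ z : ℂ, (z ≠ 0 ∧ ∀ k : ℤ, z ≠ (q : ℂ) ^ k) → C z = c₀ := by
  classical
  have hQ : (q:ℂ) ≠ 0 := St15.Qne hq0
  set S : Set ℂ := {z : ℂ | z ≠ 0 ∧ ∀ k : ℤ, z ≠ (q : ℂ) ^ k} with hSdef
  have hSopen : IsOpen S := St15.S_open hq0 hq1
  have hCd : ∀ z ∈ S, DifferentiableAt ℂ C z := fun z hz =>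
    (hC z hz).differentiableWithinAt.differentiableAt
      (mem_of_superset (hSopen.mem_nhds hz) (subset_insert _ _))
  have hCinv : ∀ z ∈ S, ∀ n : ℤ, C ((q:ℂ)^n * z) = C z := fun z hz n =>
    St15.Cinv hq0 C hinv hz n
  set ε₀ : ℝ := min (1-q) (1/q-1) with hε₀def
  have hε₀ : 0 < ε₀ := lt_min (by linarith)
    (by rw [lt_sub_iff_add_lt, zero_add, lt_div_iff₀ hq0]; linarith)
  obtain ⟨M, ε, hεpos, hM⟩ := hpole 0
  set ε₁ : ℝ := min ε ε₀ with hε₁def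
  have hε₁ : 0 < ε₁ := lt_min hεpos hε₀
  have hballS : ∀ w : ℂ, w ∈ ball (1:ℂ) ε₁ → w ≠ 1 → w ∈ S := by
    intro w hw hw1
    rw [mem_ball, dist_eq_norm] at hw
    exact St15.mem_S_of_near_one hq0 hq1 (hw.trans_le (min_le_right _ _)) hw1
  set g : ℂ → ℂ := fun z => (z - 1) * C z with hgdef
  have hgd : DifferentiableOn ℂ g (ball (1:ℂ) ε₁ \ {1}) := by
    intro z hz
    exact (((differentiableAt_id.sub_const 1).mul
      (hCd z (hballS z hz.1 (by simpa using hz.2))))).differentiableWithinAt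
  have hgb : BddAbove (norm ∘ g '' (ball (1:ℂ) ε₁ \ {1})) := by
    refine ⟨M, ?_⟩
    rintro y ⟨z, hz, rfl⟩
    obtain ⟨hzb, hz1⟩ := hz
    have hzS := hballS z hzb (by simpa using hz1)
    rw [mem_ball, dist_eq_norm] at hzb
    have hz' : ‖z - (q:ℂ)^(0:ℤ)‖ < ε := by
      simpa using hzb.trans_le (min_le_left _ _)
    have := hM z hzS hz'
    simp only [zpow_zero] at this
    simpa [hgdef] using this
  set G : ℂ → ℂ := update g 1 (limUnder (𝓝[≠] (1:ℂ)) g) with hGdef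
  have hGd : DifferentiableOn ℂ G (ball (1:ℂ) ε₁) :=
    Complex.differentiableOn_update_limUnder_of_bddAbove (ball_mem_nhds _ hε₁) hgd hgb
  have hGg : ∀ z : ℂ, z ≠ 1 → G z = g z := fun z hz => update_of_ne hz _ _
  have hr0 : G 1 = 0 := by
    set a : ℝ := (1+q)/2 with hadef
    have ha0 : 0 < a := by positivity
    have haq : q < a := by rw [hadef]; linarith
    have ha1 : a < 1 := by rw [hadef]; linarith
    set ρ : ℝ := min (q * ε₁) (q/2) with hρdef
    have hρ0 : 0 < ρ := lt_min (by positivity) (by positivity)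
    set ψ : ℂ → ℂ := fun z => (q:ℂ) * G ((q:ℂ)⁻¹ * z) * z⁻¹ with hψdef
    have hballmem : ∀ z : ℂ, z ∈ ball ((q:ℂ)) ρ → ((q:ℂ)⁻¹ * z ∈ ball (1:ℂ) ε₁ ∧ z ≠ 0) := by
      intro z hz
      rw [mem_ball, dist_eq_norm] at hz
      have h1 : ‖z - (q:ℂ)‖ < q * ε₁ := hz.trans_le (min_le_left _ _)
      have h2 : ‖z - (q:ℂ)‖ < q/2 := hz.trans_le (min_le_right _ _)
      constructor
      · rw [mem_ball, dist_eq_norm]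
        have he : (q:ℂ)⁻¹ * z - 1 = (q:ℂ)⁻¹ * (z - (q:ℂ)) := by
          field_simp
        rw [he, norm_mul, norm_inv, Complex.norm_real, Real.norm_eq_abs, abs_of_pos hq0]
        calc q⁻¹ * ‖z - (q:ℂ)‖ < q⁻¹ * (q * ε₁) :=
              mul_lt_mul_of_pos_left h1 (by positivity)
          _ = ε₁ := by field_simp
      · intro h0
        rw [h0, zero_sub, norm_neg, Complex.norm_real, Real.norm_eq_abs, abs_of_pos hq0] at h2
        linarith
    have hψd : DifferentiableOn ℂ ψ (ball ((q:ℂ)) ρ) := by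
      intro z hz
      obtain ⟨hm, hz0⟩ := hballmem z hz
      have hGat : DifferentiableAt ℂ G ((q:ℂ)⁻¹ * z) :=
        hGd.differentiableAt (isOpen_ball.mem_nhds hm)
      exact (((hGat.comp z (differentiableAt_id.const_mul _)).const_mul _).mul
        (differentiableAt_id.inv hz0)).differentiableWithinAt
    have hψQ : ψ ((q:ℂ)) = G 1 := by
      rw [hψdef]
      simp only
      rw [inv_mul_cancel₀ hQ]
      field_simp
    set φ : ℂ → ℂ := fun z => C z * z⁻¹ - G 1 * (z - (q:ℂ))⁻¹ with hφdef
    set Φ : ℂ → ℂ := update φ ((q:ℂ)) (dslope ψ ((q:ℂ)) ((q:ℂ))) with hΦdef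
    have hkey : ∀ z ∈ ball ((q:ℂ)) ρ, z ≠ (q:ℂ) → dslope ψ ((q:ℂ)) z = φ z := by
      intro z hz hzQ
      obtain ⟨hm, hz0⟩ := hballmem z hz
      have hu1 : (q:ℂ)⁻¹ * z ≠ 1 := by
        intro h
        apply hzQ
        have h2 := congrArg (fun x => (q:ℂ) * x) h
        simpa [mul_inv_cancel_left₀ hQ] using h2
      have huS : (q:ℂ)⁻¹ * z ∈ S := hballS _ hm hu1
      have hzS : z ∈ S := by
        have h3 := St15.S_mul hq0 huS 1
        rwa [zpow_one, mul_inv_cancel_left₀ hQ] at h3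
      have hCu : C ((q:ℂ)⁻¹ * z) = C z := by
        have h4 := hCinv z hzS (-1)
        rwa [zpow_neg_one] at h4
      rw [dslope_of_ne _ hzQ, slope_def_field, hψQ, hψdef]
      simp only
      rw [hGg _ hu1, hgdef]
      simp only
      rw [hCu, hφdef]
      have hzQ' : z - (q:ℂ) ≠ 0 := sub_ne_zero.2 hzQ
      field_simp
    have hΦeq : ∀ᶠ w in 𝓝 ((q:ℂ)), Φ w = dslope ψ ((q:ℂ)) w := by
      filter_upwards [ball_mem_nhds _ hρ0] with w hw
      by_cases h : w = (q:ℂ)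
      · rw [h, hΦdef]
        simp
      · rw [hΦdef]
        simp only [update_of_ne h]
        exact (hkey w hw h).symm
    have hΦQ : DifferentiableAt ℂ Φ ((q:ℂ)) := by
      have hdsl : DifferentiableAt ℂ (dslope ψ ((q:ℂ))) ((q:ℂ)) :=
        ((Complex.differentiableOn_dslope (ball_mem_nhds _ hρ0)).2 hψd).differentiableAt
          (ball_mem_nhds _ hρ0)
      exact hdsl.congr_of_eventuallyEq hΦeq
    have hq2a : q * q < q * a := by nlinarith
    have hAS : ∀ z : ℂ, q * a ≤ ‖z‖ → ‖z‖ ≤ a → z ≠ (q:ℂ) → z ∈ S := by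
      intro z hz2 hz1 hzQ
      constructor
      · intro h
        rw [h, norm_zero] at hz2
        nlinarith
      · intro k hk
        rcases lt_trichotomy k 1 with h | h | h
        · have hge : q^(0:ℤ) ≤ q^k := (zpow_le_zpow_iff_right_of_lt_one₀ hq0 hq1).2 (by omega)
          rw [zpow_zero] at hge
          rw [hk, St15.normQ hq0] at hz1
          linarith
        · exact hzQ (by rw [hk, h, zpow_one])
        · have hle : q^k ≤ q^(2:ℤ) := (zpow_le_zpow_iff_right_of_lt_one₀ hq0 hq1).2 (by omega)
          have h2 : q^(2:ℤ) = q * q := by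
            rw [show (2:ℤ) = 1+1 by norm_num, zpow_add₀ hq0.ne', zpow_one]
          rw [hk, St15.normQ hq0] at hz2
          rw [h2] at hle
          linarith
    have hΦdA : ∀ z : ℂ, q * a ≤ ‖z‖ → ‖z‖ ≤ a → DifferentiableAt ℂ Φ z := by
      intro z hz2 hz1
      by_cases h : z = (q:ℂ)
      · rw [h]; exact hΦQ
      · have hzS := hAS z hz2 hz1 h
        have hz0 : z ≠ 0 := hzS.1
        have hφd : DifferentiableAt ℂ φ z :=
          ((hCd z hzS).mul (differentiableAt_id.inv hz0)).sub
            ((((differentiableAt_id (x := z)).sub_const (q:ℂ)).inv (sub_ne_zero.2 h)).const_mul _)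
        refine hφd.congr_of_eventuallyEq
          (eventually_of_mem (isOpen_compl_singleton.mem_nhds h) fun w hw => ?_)
        exact update_of_ne hw _ _
    have hintEq : (∮ z in C(0, a), Φ z) = ∮ z in C(0, q*a), Φ z := by
      apply Complex.circleIntegral_eq_of_differentiable_on_annulus_off_countable
        (by positivity : (0:ℝ) < q*a) (by nlinarith : q*a ≤ a) countable_empty
      · intro z hz
        obtain ⟨hz1, hz2⟩ := hz
        rw [mem_closedBall, dist_zero_right] at hz1
        rw [mem_ball, dist_zero_right] at hz2
        exact (hΦdA z (not_lt.1 hz2) hz1).continuousAt.continuousWithinAt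
      · intro z hz
        obtain ⟨⟨hz1, hz2⟩, -⟩ := hz
        rw [mem_ball, dist_zero_right] at hz1
        rw [mem_closedBall, dist_zero_right] at hz2
        exact hΦdA z (not_le.1 hz2).le hz1.le
    -- outer circle
    have hsphere_a : ∀ w : ℂ, w ∈ sphere (0:ℂ) a → ‖w‖ = a := by
      intro w hw
      rwa [mem_sphere_iff_norm, sub_zero] at hw
    have hsphere_qa : ∀ w : ℂ, w ∈ sphere (0:ℂ) (q*a) → ‖w‖ = q*a := by
      intro w hw
      rwa [mem_sphere_iff_norm, sub_zero] at hw
    have hnormQ : ‖(q:ℂ)‖ = q := by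
      rw [Complex.norm_real, Real.norm_eq_abs, abs_of_pos hq0]
    have hne_a : ∀ w : ℂ, w ∈ sphere (0:ℂ) a → w ≠ (q:ℂ) := by
      intro w hw h
      have h2 := hsphere_a _ hw
      rw [h, hnormQ] at h2
      linarith
    have hne_qa : ∀ w : ℂ, w ∈ sphere (0:ℂ) (q*a) → w ≠ (q:ℂ) := by
      intro w hw h
      have := hsphere_qa _ hw
      rw [h, hnormQ] at this
      nlinarith
    have hS_a : ∀ w : ℂ, w ∈ sphere (0:ℂ) a → w ∈ S := fun w hw =>
      hAS w (by rw [hsphere_a w hw]; nlinarith) (by rw [hsphere_a w hw]) (hne_a w hw)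
    have hS_qa : ∀ w : ℂ, w ∈ sphere (0:ℂ) (q*a) → w ∈ S := fun w hw =>
      hAS w (by rw [hsphere_qa w hw]) (by rw [hsphere_qa w hw]; nlinarith) (hne_qa w hw)
    have hΦφ_a : (∮ z in C(0, a), Φ z) = ∮ z in C(0, a), φ z :=
      circleIntegral.integral_congr ha0.le fun w hw => update_of_ne (hne_a w hw) _ _
    have hΦφ_qa : (∮ z in C(0, q*a), Φ z) = ∮ z in C(0, q*a), φ z :=
      circleIntegral.integral_congr (by positivity) fun w hw => update_of_ne (hne_qa w hw) _ _
    have hfint_a : CircleIntegrable (fun z => C z * z⁻¹) 0 a := by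
      apply ContinuousOn.circleIntegrable ha0.le
      intro w hw
      exact ((hCd w (hS_a w hw)).mul
        (differentiableAt_id.inv (hS_a w hw).1)).continuousAt.continuousWithinAt
    have hfint_qa : CircleIntegrable (fun z => C z * z⁻¹) 0 (q*a) := by
      apply ContinuousOn.circleIntegrable (by positivity)
      intro w hw
      exact ((hCd w (hS_qa w hw)).mul
        (differentiableAt_id.inv (hS_qa w hw).1)).continuousAt.continuousWithinAt
    have hgint_a : CircleIntegrable (fun z => G 1 * (z - (q:ℂ))⁻¹) 0 a := by
      apply ContinuousOn.circleIntegrable ha0.le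
      intro w hw
      exact (continuousAt_const.mul ((continuousAt_id.sub continuousAt_const).inv₀
        (sub_ne_zero.2 (hne_a w hw)))).continuousWithinAt
    have hgint_qa : CircleIntegrable (fun z => G 1 * (z - (q:ℂ))⁻¹) 0 (q*a) := by
      apply ContinuousOn.circleIntegrable (by positivity)
      intro w hw
      exact (continuousAt_const.mul ((continuousAt_id.sub continuousAt_const).inv₀
        (sub_ne_zero.2 (hne_qa w hw)))).continuousWithinAt
    have hsplit_a : (∮ z in C(0, a), φ z) =
        (∮ z in C(0, a), C z * z⁻¹) - ∮ z in C(0, a), G 1 * (z - (q:ℂ))⁻¹ :=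
      circleIntegral.integral_sub hfint_a hgint_a
    have hsplit_qa : (∮ z in C(0, q*a), φ z) =
        (∮ z in C(0, q*a), C z * z⁻¹) - ∮ z in C(0, q*a), G 1 * (z - (q:ℂ))⁻¹ :=
      circleIntegral.integral_sub hfint_qa hgint_qa
    have hres_a : (∮ z in C(0, a), G 1 * (z - (q:ℂ))⁻¹) = G 1 * (2*Real.pi*I) := by
      have hsmul := circleIntegral.integral_smul (G 1) (fun z => (z - (q:ℂ))⁻¹) 0 a
      simp only [smul_eq_mul] at hsmul
      rw [hsmul, circleIntegral.integral_sub_inv_of_mem_ball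
        (by rw [mem_ball, dist_zero_right, hnormQ]; exact haq)]
    have hres_qa : (∮ z in C(0, q*a), G 1 * (z - (q:ℂ))⁻¹) = 0 := by
      have hzero : (∮ z in C(0, q*a), (z - (q:ℂ))⁻¹) = 0 := by
        apply Complex.circleIntegral_eq_zero_of_differentiable_on_off_countable
          (by positivity : (0:ℝ) ≤ q*a) countable_empty
        · intro z hz
          rw [mem_closedBall, dist_zero_right] at hz
          have hzQ : z ≠ (q:ℂ) := by
            intro h
            rw [h, hnormQ] at hz
            nlinarith
          exact ((continuousAt_id.sub continuousAt_const).inv₀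
            (sub_ne_zero.2 hzQ)).continuousWithinAt
        · intro z hz
          obtain ⟨hz1, -⟩ := hz
          rw [mem_ball, dist_zero_right] at hz1
          have hzQ : z ≠ (q:ℂ) := by
            intro h
            rw [h, hnormQ] at hz1
            nlinarith
          exact (differentiableAt_id.sub_const _).inv (sub_ne_zero.2 hzQ)
      have hsmul := circleIntegral.integral_smul (G 1) (fun z => (z - (q:ℂ))⁻¹) 0 (q*a)
      simp only [smul_eq_mul] at hsmul
      rw [hsmul, hzero, mul_zero]
    have hsub : (∮ z in C(0, q*a), C z * z⁻¹) = ∮ z in C(0, a), C z * z⁻¹ := by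
      simp only [circleIntegral]
      apply intervalIntegral.integral_congr
      intro θ hθ
      have hwn : ‖circleMap 0 a θ‖ = a := by
        rw [norm_circleMap_zero, abs_of_pos ha0]
      have hwS : circleMap 0 a θ ∈ S :=
        hAS _ (by rw [hwn]; nlinarith) (by rw [hwn]) (by
          intro h
          rw [h, hnormQ] at hwn
          linarith)
      have hw0 : circleMap 0 a θ ≠ 0 := hwS.1
      have hmap : circleMap 0 (q*a) θ = (q:ℂ) * circleMap 0 a θ := by
        simp only [circleMap, zero_add]
        push_cast
        ring
      simp only [deriv_circleMap, hmap, smul_eq_mul]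
      rw [hinv _ hwS]
      have hmap0 : circleMap 0 (q*a) θ * I = (q:ℂ) * circleMap 0 a θ * I := by rw [hmap]
      field_simp
    have hfinal : G 1 * (2*Real.pi*I) = 0 := by
      have h1 := hintEq
      rw [hΦφ_a, hΦφ_qa, hsplit_a, hsplit_qa, hres_a, hres_qa, hsub] at h1
      linear_combination -h1
    rcases mul_eq_zero.1 hfinal with h | h
    · exact h
    · exact absurd h Complex.two_pi_I_ne_zero
  -- the analytic extension near 1
  set h₁ : ℂ → ℂ := dslope G 1 with hh₁def
  have hh₁d : DifferentiableOn ℂ h₁ (ball (1:ℂ) ε₁) :=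
    (Complex.differentiableOn_dslope (ball_mem_nhds _ hε₁)).2 hGd
  have hh₁C : ∀ z ∈ ball (1:ℂ) ε₁, z ≠ 1 → h₁ z = C z := by
    intro z hz hz1
    rw [hh₁def, dslope_of_ne _ hz1, slope_def_field, hr0, hGg z hz1, hgdef]
    field_simp [sub_ne_zero.2 hz1]
    simp
  set c₁ : ℂ := h₁ 1 with hc₁def
  set D : ℂ → ℂ := fun z => if z ∈ S then C z else c₁ with hDdef
  have hDS : ∀ z ∈ S, D z = C z := fun z hz => if_pos hz
  have hDk : ∀ k : ℤ, ∀ w ∈ ball ((q:ℂ)^k) (q^k * ε₁), D w = h₁ ((q:ℂ)^(-k) * w) := by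
    intro k w hw
    rw [mem_ball, dist_eq_norm] at hw
    have hval : (q:ℂ)^(-k) * (q:ℂ)^k = 1 := by
      rw [← zpow_add₀ hQ, neg_add_cancel, zpow_zero]
    have hmem : (q:ℂ)^(-k) * w ∈ ball (1:ℂ) ε₁ := by
      rw [mem_ball, dist_eq_norm]
      have h2 : (q:ℂ)^(-k) * w - 1 = (q:ℂ)^(-k) * (w - (q:ℂ)^k) := by
        rw [mul_sub, hval]
      rw [h2, norm_mul, St15.normQ hq0]
      calc q^(-k) * ‖w - (q:ℂ)^k‖ < q^(-k) * (q^k * ε₁) :=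
            mul_lt_mul_of_pos_left hw (by positivity)
        _ = ε₁ := by
            rw [← mul_assoc, ← zpow_add₀ hq0.ne', neg_add_cancel, zpow_zero, one_mul]
    by_cases hwk : w = (q:ℂ)^k
    · have hwS : w ∉ S := fun h => h.2 k hwk
      rw [hDdef]
      simp only [if_neg hwS]
      rw [hwk, hval, hc₁def]
    · have hu1 : (q:ℂ)^(-k) * w ≠ 1 := by
        intro h
        apply hwk
        have := congrArg (fun x => (q:ℂ)^k * x) h
        simp only [mul_one] at this
        rw [← mul_assoc, mul_comm ((q:ℂ)^k) ((q:ℂ)^(-k)), hval, one_mul] at this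
        exact this
      have huS : (q:ℂ)^(-k) * w ∈ S := hballS _ hmem hu1
      have hwS : w ∈ S := by
        have := St15.S_mul hq0 huS k
        rwa [← mul_assoc, mul_comm ((q:ℂ)^k) ((q:ℂ)^(-k)), hval, one_mul] at this
      rw [hDS w hwS, hh₁C _ hmem hu1]
      exact (hCinv w hwS (-k)).symm
  have hDd : ∀ z : ℂ, z ≠ 0 → DifferentiableAt ℂ D z := by
    intro z hz0
    by_cases hzS : z ∈ S
    · exact (hCd z hzS).congr_of_eventuallyEq
        (eventually_of_mem (hSopen.mem_nhds hzS) hDS)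
    · have hk : ∃ k : ℤ, z = (q:ℂ)^k := by
        by_contra h
        push_neg at h
        exact hzS ⟨hz0, h⟩
      obtain ⟨k, rfl⟩ := hk
      have hval : (q:ℂ)^(-k) * (q:ℂ)^k = 1 := by
        rw [← zpow_add₀ hQ, neg_add_cancel, zpow_zero]
      have inner : DifferentiableAt ℂ (fun w : ℂ => (q:ℂ)^(-k) * w) ((q:ℂ)^k) :=
        differentiableAt_id.const_mul _
      have houter : DifferentiableAt ℂ h₁ ((q:ℂ)^(-k) * (q:ℂ)^k) := by
        rw [hval]
        exact hh₁d.differentiableAt (ball_mem_nhds _ hε₁)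
      have hcomp : DifferentiableAt ℂ (fun w : ℂ => h₁ ((q:ℂ)^(-k) * w)) ((q:ℂ)^k) :=
        houter.comp _ inner
      exact hcomp.congr_of_eventuallyEq
        (eventually_of_mem (ball_mem_nhds _ (by positivity : (0:ℝ) < q^k * ε₁)) (hDk k))
  have hDinv1 : ∀ z : ℂ, z ≠ 0 → D ((q:ℂ) * z) = D z := by
    intro z hz0
    by_cases hzS : z ∈ S
    · have h2 : (q:ℂ) * z ∈ S := by
        have := St15.S_mul hq0 hzS 1
        rwa [zpow_one] at this
      rw [hDS _ h2, hDS _ hzS, hinv z hzS]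
    · have hk : ∃ k : ℤ, z = (q:ℂ)^k := by
        by_contra h
        push_neg at h
        exact hzS ⟨hz0, h⟩
      obtain ⟨k, rfl⟩ := hk
      have h2 : (q:ℂ) * (q:ℂ)^k ∉ S := by
        intro h
        exact h.2 (k+1) (by rw [zpow_add₀ hQ, zpow_one]; ring)
      rw [hDdef]
      simp only [if_neg h2, if_neg hzS]
  have hDinvn : ∀ n : ℤ, ∀ z : ℂ, z ≠ 0 → D ((q:ℂ)^n * z) = D z := by
    intro n
    induction n using Int.induction_on with
    | zero => intro z hz; rw [zpow_zero, one_mul]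
    | succ n ih =>
      intro z hz
      rw [show (q:ℂ)^((n:ℤ)+1) * z = (q:ℂ) * ((q:ℂ)^(n:ℤ) * z) by
          rw [zpow_add₀ hQ, zpow_one]; ring,
        hDinv1 _ (mul_ne_zero (zpow_ne_zero _ hQ) hz), ih z hz]
    | pred n ih =>
      intro z hz
      have h1 : (q:ℂ)^(-(n:ℤ)) * z = (q:ℂ) * ((q:ℂ)^(-(n:ℤ)-1) * z) := by
        rw [← mul_assoc, ← zpow_one_add₀ hQ]; ring_nf
      rw [← ih z hz, h1, hDinv1 _ (mul_ne_zero (zpow_ne_zero _ hQ) hz)]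
  -- bound on the extension
  have hKsub : closedBall (0:ℂ) 1 \ ball 0 q ⊆ {(0:ℂ)}ᶜ := by
    rintro z ⟨_, hz2⟩
    simp only [mem_compl_iff, mem_singleton_iff]
    intro h
    exact hz2 (by simp [h, hq0])
  have hDcont : ContinuousOn D {(0:ℂ)}ᶜ := fun z hz =>
    (hDd z hz).continuousAt.continuousWithinAt
  obtain ⟨B, hB⟩ := ((isCompact_closedBall (0:ℂ) 1).diff isOpen_ball).exists_bound_of_continuousOn
    (hDcont.mono hKsub)
  have hBall : ∀ z : ℂ, z ≠ 0 → ‖D z‖ ≤ B := by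
    intro z hz
    have hnz : 0 < ‖z‖ := norm_pos_iff.2 hz
    have hinvq : 1 < q⁻¹ := (one_lt_inv₀ hq0).2 hq1
    obtain ⟨n, hn1, hn2⟩ := exists_mem_Ico_zpow hnz hinvq
    rw [inv_zpow, ← zpow_neg] at hn1 hn2
    have hp : (0:ℝ) < q^((n:ℤ)+1) := zpow_pos hq0 _
    have e1 : q^((n:ℤ)+1) * q^(-n) = q := by
      have h : (n:ℤ)+1 + -n = 1 := by ring
      rw [← zpow_add₀ hq0.ne', h, zpow_one]
    have e2 : q^((n:ℤ)+1) * q^(-((n:ℤ)+1)) = 1 := by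
      rw [← zpow_add₀ hq0.ne', add_neg_cancel, zpow_zero]
    have hub : q^((n:ℤ)+1) * ‖z‖ < 1 := by
      calc q^((n:ℤ)+1) * ‖z‖ < q^((n:ℤ)+1) * q^(-((n:ℤ)+1)) := mul_lt_mul_of_pos_left hn2 hp
        _ = 1 := e2
    have hlb : q ≤ q^((n:ℤ)+1) * ‖z‖ := by
      calc q = q^((n:ℤ)+1) * q^(-(n:ℤ)) := e1.symm
        _ ≤ q^((n:ℤ)+1) * ‖z‖ := mul_le_mul_of_nonneg_left hn1 hp.le
    have hw : (q:ℂ)^((n:ℤ)+1) * z ∈ closedBall (0:ℂ) 1 \ ball 0 q := by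
      constructor
      · rw [mem_closedBall, dist_zero_right, norm_mul, St15.normQ hq0]
        exact hub.le
      · rw [mem_ball, dist_zero_right, norm_mul, St15.normQ hq0]
        exact not_lt.2 hlb
    calc ‖D z‖ = ‖D ((q:ℂ)^((n:ℤ)+1) * z)‖ := by rw [hDinvn ((n:ℤ)+1) z hz]
      _ ≤ B := hB _ hw
  have hDd' : DifferentiableOn ℂ D (univ \ {0}) := fun z hz =>
    (hDd z (by simpa using hz.2)).differentiableWithinAt
  have hbdd : BddAbove (norm ∘ D '' (univ \ {0})) := by
    refine ⟨B, ?_⟩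
    rintro y ⟨z, hz, rfl⟩
    exact hBall z (by simpa using hz.2)
  set E : ℂ → ℂ := update D 0 (limUnder (𝓝[≠] (0:ℂ)) D) with hEdef
  have hEd : DifferentiableOn ℂ E univ :=
    Complex.differentiableOn_update_limUnder_of_bddAbove univ_mem hDd' hbdd
  have hEdiff : Differentiable ℂ E := differentiableOn_univ.1 hEd
  have hEbd : ∀ z : ℂ, ‖E z‖ ≤ max B ‖E 0‖ := by
    intro z
    by_cases h : z = 0
    · rw [h]; exact le_max_right _ _
    · rw [hEdef, update_of_ne h]
      exact le_max_of_le_left (hBall z h)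
  have hbound : Bornology.IsBounded (range E) :=
    isBounded_iff_forall_norm_le.2 ⟨max B ‖E 0‖, by rintro y ⟨z, rfl⟩; exact hEbd z⟩
  refine ⟨E 1, fun z hz => ?_⟩
  calc C z = D z := (hDS z hz).symm
    _ = E z := (update_of_ne hz.1 _ _).symm
    _ = E 1 := hEdiff.apply_eq_apply_of_bounded hbound z 1
end

section
/- Let F be analytic on ℂ ∖ {0} and satisfy the q-difference equation F(qz) = z^{-1} F(z) for all z ≠ 0. Then the Laurent coefficients (F_k)_{k∈ℤ} of F (i.e. F(z) = Σ_{k=−∞}^∞ F_k z^k, converging on ℂ ∖ {0}) satisfy F_k = F_0 · q^{k(k−1)/2} for every k ∈ ℤ. Consequently the space of analytic solutions on ℂ ∖ {0} of F(qz) = z^{-1}F(z) is one-dimensional: every solution is a constant multiple of Θ(z) = Σ_{k=−∞}^∞ q^{k(k−1)/2} z^k. -/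
open MeasureTheory Real

lemma circ_int (m : ℤ) :
    ∫ θ in (0:ℝ)..(2*Real.pi), Complex.exp (m * θ * Complex.I) =
      if m = 0 then (2*Real.pi : ℂ) else 0 := by
  split_ifs with h
  · simp [h]
  · have hc : (m : ℂ) * Complex.I ≠ 0 := by simp [h, Complex.I_ne_zero]
    have key := integral_exp_mul_complex (a := (0:ℝ)) (b := 2*Real.pi) hc
    simp_rw [show ∀ θ:ℝ, (m:ℂ) * θ * Complex.I = ((m:ℂ) * Complex.I) * θ from fun θ => by ring]
    rw [key]
    rw [show (m:ℂ) * Complex.I * ((2*Real.pi:ℝ):ℂ) = (m:ℂ) * (2*Real.pi*Complex.I) by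
      push_cast; ring]
    rw [Complex.exp_int_mul_two_pi_mul_I]
    simp

lemma coeff_zero (a : ℤ → ℂ)
    (h : ∀ z : ℂ, z ≠ 0 → HasSum (fun k : ℤ => a k * z ^ k) 0) :
    ∀ n : ℤ, a n = 0 := by
  intro n
  have hsummable : Summable a := by
    have := (h 1 one_ne_zero).summable
    simpa using this
  have hnorm : Summable (fun k : ℤ => ‖a k‖) := hsummable.norm
  -- pointwise sums on the circle
  set f : ℤ → ℝ → ℂ := fun k θ => a k * Complex.exp (((k - n : ℤ) : ℂ) * θ * Complex.I) with hf
  have hpt : ∀ θ : ℝ, HasSum (fun k => f k θ) 0 := by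
    intro θ
    have hz : Complex.exp (θ * Complex.I) ≠ 0 := Complex.exp_ne_zero _
    have h1 := (h _ hz).mul_right (Complex.exp (θ * Complex.I) ^ (-n : ℤ))
    rw [zero_mul] at h1
    convert h1 using 2 with k
    · exact rfl
    rw [hf]
    simp only [mul_assoc]
    congr 1
    rw [← zpow_add₀ hz, ← Complex.exp_int_mul]
    push_cast
    ring_nf
  have hμ : ∀ k : ℤ, Integrable (f k) (volume.restrict (Set.Ioc 0 (2*Real.pi))) := by
    intro k
    apply Continuous.integrableOn_Ioc
    fun_prop
  have hnormval : ∀ k : ℤ, (∫ θ, ‖f k θ‖ ∂(volume.restrict (Set.Ioc 0 (2*Real.pi)))) = (2*Real.pi) * ‖a k‖ := by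
    intro k
    have : ∀ θ : ℝ, ‖f k θ‖ = ‖a k‖ := by
      intro θ
      rw [hf]
      simp only [norm_mul, Complex.norm_exp]
      have : (((k - n : ℤ) : ℂ) * θ * Complex.I).re = 0 := by
        simp [Complex.mul_re, Complex.mul_im]
      rw [this]
      simp
    simp_rw [this]
    rw [integral_const]
    simp [Real.volume_Ioc, Real.pi_nonneg, ENNReal.toReal_ofReal,
      mul_nonneg, Real.pi_pos.le]
  have hsum2 : Summable fun k : ℤ => ∫ θ, ‖f k θ‖ ∂(volume.restrict (Set.Ioc 0 (2*Real.pi))) := by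
    simp_rw [hnormval]
    exact hnorm.mul_left _
  have hmain := MeasureTheory.hasSum_integral_of_summable_integral_norm hμ hsum2
  have hzero : (∫ θ, (∑' k, f k θ) ∂(volume.restrict (Set.Ioc 0 (2*Real.pi)))) = 0 := by
    have : ∀ θ : ℝ, (∑' k, f k θ) = 0 := fun θ => (hpt θ).tsum_eq
    simp_rw [this]
    simp
  rw [hzero] at hmain
  -- compute each integral
  have hval : ∀ k : ℤ, (∫ θ, f k θ ∂(volume.restrict (Set.Ioc 0 (2*Real.pi)))) =
      if k = n then (2*Real.pi : ℂ) * a n else 0 := by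
    intro k
    have h2 : (∫ θ, f k θ ∂(volume.restrict (Set.Ioc 0 (2*Real.pi)))) =
        ∫ θ in (0:ℝ)..(2*Real.pi), f k θ := by
      rw [intervalIntegral.integral_of_le (by positivity)]
    rw [h2, hf]
    simp only
    rw [intervalIntegral.integral_const_mul, circ_int (k - n)]
    split_ifs with h1 h2 h3
    · obtain rfl : k = n := by omega
      ring
    · exact absurd (by omega) h2
    · exact absurd (by omega) h1
    · ring
  simp_rw [hval] at hmain
  have hone : HasSum (fun k : ℤ => if k = n then (2*Real.pi : ℂ) * a n else 0)
      ((2*Real.pi : ℂ) * a n) := hasSum_ite_eq n _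
  have := hmain.unique hone
  have hpi : (2*Real.pi : ℂ) ≠ 0 := by
    simp [Real.pi_ne_zero]
  field_simp at this
  exact (mul_eq_zero.mp this.symm).resolve_left hpi

/-- the Laurent coefficients of an analytic solution on `ℂ ∖ {0}` of
`F(qz) = z⁻¹ F(z)` satisfy `F_k = F_0 q^{k(k-1)/2}`; consequently every such
solution is a constant multiple of `Θ(z) = Σ_{k=-∞}^∞ q^{k(k-1)/2} z^k`. -/
theorem statement17 (q : ℝ) (hq0 : 0 < q) (hq1 : q < 1)
    (F : ℂ → ℂ) (hF : AnalyticOn ℂ F {z : ℂ | z ≠ 0})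
    (heq : ∀ z : ℂ, z ≠ 0 → F ((q : ℂ) * z) = z⁻¹ * F z)
    (Fc : ℤ → ℂ)
    (hFc : ∀ z : ℂ, z ≠ 0 → HasSum (fun k : ℤ => Fc k * z ^ k) (F z)) :
    (∀ k : ℤ, Fc k = Fc 0 * (q : ℂ) ^ (k * (k - 1) / 2)) ∧
    ∀ z : ℂ, z ≠ 0 → F z = Fc 0 * ∑' k : ℤ, (q : ℂ) ^ (k * (k - 1) / 2) * z ^ k := by
  have hqC : (q : ℂ) ≠ 0 := by
    exact_mod_cast hq0.ne'
  -- the difference of the two Laurent expansions vanishes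
  have hzero : ∀ k : ℤ, Fc k * (q : ℂ) ^ k - Fc (k + 1) = 0 := by
    apply coeff_zero
    intro z hz
    have h1 := hFc ((q : ℂ) * z) (mul_ne_zero hqC hz)
    rw [heq z hz] at h1
    have h1' : HasSum (fun k : ℤ => Fc k * (q : ℂ) ^ k * z ^ k) (z⁻¹ * F z) := by
      convert h1 using 2 with k
      rw [mul_zpow]
      ring
    have h2 := (hFc z hz).mul_left z⁻¹
    have h2' : HasSum (fun k : ℤ => Fc k * z ^ (k - 1)) (z⁻¹ * F z) := by
      convert h2 using 2 with k
      · exact rfl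
      rw [zpow_sub₀ hz, zpow_one]
      field_simp
      try ring
    have h3 : HasSum (fun k : ℤ => Fc (k + 1) * z ^ k) (z⁻¹ * F z) := by
      have := ((Equiv.addRight (1 : ℤ)).hasSum_iff).2 h2'
      convert this using 2 with k
      simp [Equiv.addRight]
    have := h1'.sub h3
    rw [sub_self] at this
    convert this using 2 with k
    · exact rfl
    ring
  have hrec : ∀ k : ℤ, Fc (k + 1) = Fc k * (q : ℂ) ^ k := by
    intro k
    have := hzero k
    linear_combination -this
  have down : ∀ j : ℤ, Fc j = Fc (j + 1) * (q : ℂ) ^ (-j) := by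
    intro j
    rw [hrec j, mul_assoc, ← zpow_add₀ hqC, show j + -j = 0 by ring, zpow_zero, mul_one]
  -- exponent arithmetic
  have key : ∀ m : ℤ, (m + 1) * (m + 1 - 1) / 2 = m * (m - 1) / 2 + m := by
    intro m
    obtain ⟨c, hc⟩ := Int.even_mul_succ_self (m - 1)
    have hc2 : m * (m - 1) = c + c := by linear_combination hc
    have g1 : (m + 1) * (m + 1 - 1) = 2 * (c + m) := by linear_combination hc2
    rw [g1, hc2]
    omega
  have part1 : ∀ k : ℤ, Fc k = Fc 0 * (q : ℂ) ^ (k * (k - 1) / 2) := by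
    intro k
    induction k using Int.induction_on with
    | zero => simp
    | succ m ih =>
      rw [hrec m, ih, key m, zpow_add₀ hqC]
      push_cast
      ring
    | pred m ih =>
      have hd := down (-(m : ℤ) - 1)
      rw [show (-(m : ℤ) - 1 + 1) = -(m : ℤ) by ring] at hd
      rw [hd, ih, mul_assoc, ← zpow_add₀ hqC,
        show (-(-(m : ℤ) - 1)) = (m : ℤ) + 1 by ring]
      have e1 := key (-(m : ℤ) - 1)
      rw [show (-(m : ℤ) - 1 + 1) = -(m : ℤ) by ring] at e1
      congr 2
      linarith [e1]
  refine ⟨part1, ?_⟩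
  intro z hz
  have h1 : HasSum (fun k : ℤ => Fc 0 * ((q : ℂ) ^ (k * (k - 1) / 2) * z ^ k)) (F z) := by
    convert hFc z hz using 2 with k
    rw [part1 k]
    ring
  rw [← h1.tsum_eq, tsum_mul_left]
end
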